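/- arXiv:1602.04396 — 7 statements merged into one kernel-verified Lean document; each statement's English description precedes it below -/
import Mathlib

section
/- Let Ω_U ⊆ σB(n₁×r) and Ω_V ⊆ σB(n₂×r) be nonempty subsets of the balls of radius σ (in Frobenius norm) in the spaces of n₁×r and n₂×r real matrices respectively. If Ω_B ⊆ {U Vᵀ : U ∈ Ω_U, V ∈ Ω_V}, then for every ρ > 0 the covering number satisfies N_{Ω_B}(ρ) ≤ N_{Ω_U}(ρ/(2σ)) · N_{Ω_V}(ρ/(2σ)). -/
open Matrix

noncomputable def coveringNumber {E : Type*} [PseudoMetricSpace E] (Ω : Set E) (ρ : ℝ) : ℕ :=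
  sInf {k : ℕ | ∃ C : Finset E, C.card = k ∧ Ω ⊆ ⋃ c ∈ C, Metric.closedBall c ρ}

attribute [local instance] Matrix.frobeniusNormedAddCommGroup
attribute [local instance] Matrix.frobeniusNormedSpace

section Aux

open RealInnerProductSpace

/-- Projection towards the ball: scaling by `σ/‖c‖` does not increase distance to points
inside the σ-ball, in a real inner product space. -/
lemma proj_ball_aux {F : Type*} [NormedAddCommGroup F] [InnerProductSpace ℝ F]
    (σ : ℝ) (hσ : 0 < σ) (u c : F) (hu : ‖u‖ ≤ σ) (hc : σ ≤ ‖c‖) :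
    ‖u - (σ / ‖c‖) • c‖ ≤ ‖u - c‖ := by
  have hcpos : (0:ℝ) < ‖c‖ := lt_of_lt_of_le hσ hc
  set t : ℝ := σ / ‖c‖ with ht
  have ht0 : 0 ≤ t := div_nonneg hσ.le hcpos.le
  have ht1 : t ≤ 1 := (div_le_one hcpos).mpr hc
  have htc : t * ‖c‖ = σ := div_mul_cancel₀ _ hcpos.ne'
  have hinner : ⟪u, c⟫ ≤ σ * ‖c‖ := by
    calc ⟪u, c⟫ ≤ ‖u‖ * ‖c‖ := real_inner_le_norm u c
    _ ≤ σ * ‖c‖ := by nlinarith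
  have h1 : ‖u - t • c‖ ^ 2 ≤ ‖u - c‖ ^ 2 := by
    rw [norm_sub_sq_real, norm_sub_sq_real, real_inner_smul_right, norm_smul,
      Real.norm_eq_abs, abs_of_nonneg ht0]
    nlinarith [norm_nonneg u, norm_nonneg c]
  have h2 := Real.sqrt_le_sqrt h1
  rwa [Real.sqrt_sq (norm_nonneg _), Real.sqrt_sq (norm_nonneg _)] at h2

/-- Flatten a matrix into a Euclidean vector. -/
def flat {a b : ℕ} (A : Matrix (Fin a) (Fin b) ℝ) : EuclideanSpace ℝ (Fin a × Fin b) :=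
  WithLp.toLp 2 (fun p : Fin a × Fin b => A p.1 p.2)

/-- Frobenius norm equals the Euclidean norm of the flattened matrix. -/
lemma frob_eq_euclid {a b : ℕ} (A : Matrix (Fin a) (Fin b) ℝ) :
    ‖A‖ = ‖flat A‖ := by
  rw [Matrix.frobenius_norm_def, EuclideanSpace.norm_eq]
  rw [← Real.sqrt_eq_rpow, ← Finset.sum_product', Finset.univ_product_univ]
  congr 1
  refine Finset.sum_congr rfl fun p _ => ?_
  rw [show ‖flat A p‖ = ‖A p.1 p.2‖ from rfl, ← Real.rpow_natCast ‖A p.1 p.2‖ 2]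
  norm_num

lemma proj_ball_mat {a b : ℕ} (σ : ℝ) (hσ : 0 < σ) (U c : Matrix (Fin a) (Fin b) ℝ)
    (hU : ‖U‖ ≤ σ) (hc : σ ≤ ‖c‖) :
    ‖U - (σ / ‖c‖) • c‖ ≤ ‖U - c‖ := by
  have h1 : flat (U - (σ / ‖c‖) • c) = flat U - (σ / ‖c‖) • flat c := by
    ext p; simp [flat, Matrix.sub_apply, Matrix.smul_apply]
  have h2 : flat (U - c) = flat U - flat c := by
    ext p; simp [flat, Matrix.sub_apply]
  rw [show ‖U - (σ / ‖c‖) • c‖ = ‖flat U - (σ / ‖c‖) • flat c‖ from by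
      rw [frob_eq_euclid, h1],
    show ‖U - c‖ = ‖flat U - flat c‖ from by rw [frob_eq_euclid, h2]]
  have hnc : ‖flat c‖ = ‖c‖ := (frob_eq_euclid c).symm
  have hnu : ‖flat U‖ ≤ σ := by rw [← frob_eq_euclid]; exact hU
  have hnc' : σ ≤ ‖flat c‖ := by rw [hnc]; exact hc
  have key := proj_ball_aux σ hσ (flat U) (flat c) hnu hnc'
  rwa [hnc] at key

/-- clip to the σ-ball -/
noncomputable def clip {a b : ℕ} (σ : ℝ) (c : Matrix (Fin a) (Fin b) ℝ) :
    Matrix (Fin a) (Fin b) ℝ :=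
  if ‖c‖ ≤ σ then c else (σ / ‖c‖) • c

lemma clip_norm_le {a b : ℕ} (σ : ℝ) (hσ : 0 < σ) (c : Matrix (Fin a) (Fin b) ℝ) :
    ‖clip σ c‖ ≤ σ := by
  unfold clip
  split_ifs with h
  · exact h
  · push_neg at h
    have hcpos : (0:ℝ) < ‖c‖ := hσ.trans h
    rw [norm_smul, Real.norm_eq_abs, abs_of_nonneg (div_nonneg hσ.le hcpos.le),
      div_mul_cancel₀ _ hcpos.ne']

lemma clip_dist_le {a b : ℕ} (σ : ℝ) (hσ : 0 < σ) (U c : Matrix (Fin a) (Fin b) ℝ)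
    (hU : ‖U‖ ≤ σ) : ‖U - clip σ c‖ ≤ ‖U - c‖ := by
  unfold clip
  split_ifs with h
  · exact le_refl _
  · push_neg at h
    exact proj_ball_mat σ hσ U c hU h.le

/-- Bounded sets in a proper space admit finite closed-ball covers. -/
lemma exists_finite_cover {E : Type*} [PseudoMetricSpace E]
    (Ω : Set E) (htb : TotallyBounded Ω) (ε : ℝ) (hε : 0 < ε) :
    ∃ C : Finset E, Ω ⊆ ⋃ c ∈ C, Metric.closedBall c ε := by
  obtain ⟨t, htf, hcov⟩ := Metric.totallyBounded_iff.mp htb ε hε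
  refine ⟨htf.toFinset, hcov.trans ?_⟩
  refine Set.iUnion₂_mono' fun c hc => ⟨c, by simpa using hc, Metric.ball_subset_closedBall⟩

end Aux

/-- covering number of a set of products `U Vᵀ`. -/
theorem covering_product {n₁ n₂ r : ℕ} (σ : ℝ) (hσ : 0 < σ)
    (ΩU : Set (Matrix (Fin n₁) (Fin r) ℝ)) (ΩV : Set (Matrix (Fin n₂) (Fin r) ℝ))
    (hUne : ΩU.Nonempty) (hVne : ΩV.Nonempty)
    (hUb : ΩU ⊆ Metric.closedBall 0 σ) (hVb : ΩV ⊆ Metric.closedBall 0 σ)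
    (ΩB : Set (Matrix (Fin n₁) (Fin n₂) ℝ))
    (hB : ΩB ⊆ {X | ∃ U ∈ ΩU, ∃ V ∈ ΩV, X = U * Vᵀ})
    (ρ : ℝ) (hρ : 0 < ρ) :
    coveringNumber ΩB ρ ≤
      coveringNumber ΩU (ρ / (2 * σ)) * coveringNumber ΩV (ρ / (2 * σ)) := by
  set ε := ρ / (2 * σ) with hε_def
  have hεpos : 0 < ε := div_pos hρ (by positivity)
  have hεσ : ε * σ = ρ / 2 := by rw [hε_def]; field_simp
  have htbU : TotallyBounded ΩU :=
    ((isCompact_closedBall (0 : Matrix (Fin n₁) (Fin r) ℝ) σ).totallyBounded).subset hUb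
  have htbV : TotallyBounded ΩV :=
    ((isCompact_closedBall (0 : Matrix (Fin n₂) (Fin r) ℝ) σ).totallyBounded).subset hVb
  have hSU : {k : ℕ | ∃ C : Finset (Matrix (Fin n₁) (Fin r) ℝ),
      C.card = k ∧ ΩU ⊆ ⋃ c ∈ C, Metric.closedBall c ε}.Nonempty := by
    obtain ⟨C, hC⟩ := exists_finite_cover ΩU htbU ε hεpos
    exact ⟨C.card, C, rfl, hC⟩
  have hSV : {k : ℕ | ∃ C : Finset (Matrix (Fin n₂) (Fin r) ℝ),
      C.card = k ∧ ΩV ⊆ ⋃ c ∈ C, Metric.closedBall c ε}.Nonempty := by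
    obtain ⟨C, hC⟩ := exists_finite_cover ΩV htbV ε hεpos
    exact ⟨C.card, C, rfl, hC⟩
  obtain ⟨CU, hCUcard, hCUcov⟩ := Nat.sInf_mem hSU
  obtain ⟨CV, hCVcard, hCVcov⟩ := Nat.sInf_mem hSV
  set CB : Finset (Matrix (Fin n₁) (Fin n₂) ℝ) :=
    (CU ×ˢ CV).image (fun p => clip σ p.1 * (clip σ p.2)ᵀ) with hCB
  have hcov : ΩB ⊆ ⋃ c ∈ CB, Metric.closedBall c ρ := by
    intro X hX
    obtain ⟨U, hU, V, hV, rfl⟩ := hB hX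
    obtain ⟨c, hc, hUc⟩ := Set.mem_iUnion₂.mp (hCUcov hU)
    obtain ⟨d, hd, hVd⟩ := Set.mem_iUnion₂.mp (hCVcov hV)
    have hUσ : ‖U‖ ≤ σ := by simpa [mem_closedBall_zero_iff] using hUb hU
    have hVσ : ‖V‖ ≤ σ := by simpa [mem_closedBall_zero_iff] using hVb hV
    have hUc' : ‖U - c‖ ≤ ε := by rwa [Metric.mem_closedBall, dist_eq_norm] at hUc
    have hVd' : ‖V - d‖ ≤ ε := by rwa [Metric.mem_closedBall, dist_eq_norm] at hVd
    have hUclip : ‖U - clip σ c‖ ≤ ε := (clip_dist_le σ hσ U c hUσ).trans hUc'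
    have hVclip : ‖V - clip σ d‖ ≤ ε := (clip_dist_le σ hσ V d hVσ).trans hVd'
    refine Set.mem_iUnion₂.mpr ⟨clip σ c * (clip σ d)ᵀ,
      Finset.mem_image.mpr ⟨(c, d), Finset.mem_product.mpr ⟨hc, hd⟩, rfl⟩, ?_⟩
    rw [Metric.mem_closedBall, dist_eq_norm]
    have key : U * Vᵀ - clip σ c * (clip σ d)ᵀ
        = (U - clip σ c) * Vᵀ + clip σ c * (V - clip σ d)ᵀ := by
      rw [Matrix.transpose_sub, Matrix.sub_mul, Matrix.mul_sub]
      abel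
    rw [key]
    calc ‖(U - clip σ c) * Vᵀ + clip σ c * (V - clip σ d)ᵀ‖
        ≤ ‖(U - clip σ c) * Vᵀ‖ + ‖clip σ c * (V - clip σ d)ᵀ‖ := norm_add_le _ _
      _ ≤ ‖U - clip σ c‖ * ‖Vᵀ‖ + ‖clip σ c‖ * ‖(V - clip σ d)ᵀ‖ :=
          add_le_add (Matrix.frobenius_norm_mul _ _) (Matrix.frobenius_norm_mul _ _)
      _ = ‖U - clip σ c‖ * ‖V‖ + ‖clip σ c‖ * ‖V - clip σ d‖ := by
          rw [Matrix.frobenius_norm_transpose, Matrix.frobenius_norm_transpose]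
      _ ≤ ε * σ + σ * ε := by
          have h1 := clip_norm_le σ hσ c
          have h2 : (0:ℝ) ≤ ‖V - clip σ d‖ := norm_nonneg _
          have h3 : (0:ℝ) ≤ ‖V‖ := norm_nonneg _
          have h4 : (0:ℝ) ≤ ‖U - clip σ c‖ := norm_nonneg _
          have h5 : (0:ℝ) ≤ ‖clip σ c‖ := norm_nonneg _
          nlinarith
      _ ≤ ρ := by nlinarith
  have hle : coveringNumber ΩB ρ ≤ CB.card := Nat.sInf_le ⟨CB, rfl, hcov⟩
  calc coveringNumber ΩB ρ ≤ CB.card := hle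
    _ ≤ (CU ×ˢ CV).card := Finset.card_image_le
    _ = CU.card * CV.card := Finset.card_product _ _
    _ = coveringNumber ΩU ε * coveringNumber ΩV ε := by rw [hCUcard, hCVcard]; rfl
end

section
/- Let Ω_U ⊆ σB(n×r) be a nonempty subset of the Frobenius-norm ball of radius σ in ℝ^{n×r}, and let Λ be an r×r diagonal matrix whose diagonal entries are ±1. If Ω_B ⊆ {U Λ Uᵀ : U ∈ Ω_U}, then for every ρ > 0, N_{Ω_B}(ρ) ≤ N_{Ω_U}(ρ/(2σ)). -/
open Matrix

attribute [local instance] Matrix.frobeniusNormedAddCommGroup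

attribute [local instance] Matrix.frobeniusNormedSpace


lemma frob_norm_sq {a b : ℕ} (A : Matrix (Fin a) (Fin b) ℝ) :
    ‖A‖ ^ 2 = ∑ i, ∑ j, A i j ^ 2 := by
  have h0 : (0:ℝ) ≤ ∑ i, ∑ j, ‖A i j‖ ^ (2:ℝ) := by positivity
  rw [Matrix.frobenius_norm_def, ← Real.rpow_natCast (_ ^ (1/2 : ℝ)) 2,
    ← Real.rpow_mul h0]
  norm_num [Real.rpow_two, sq_abs]

lemma frob_dot_le {a b : ℕ} (A B : Matrix (Fin a) (Fin b) ℝ) :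
    ∑ i, ∑ j, A i j * B i j ≤ ‖A‖ * ‖B‖ := by
  have h := Finset.sum_mul_sq_le_sq_mul_sq Finset.univ
    (fun p : Fin a × Fin b => A p.1 p.2) (fun p => B p.1 p.2)
  have hA : ∑ p : Fin a × Fin b, A p.1 p.2 ^ 2 = ‖A‖ ^ 2 := by
    rw [frob_norm_sq, ← Finset.sum_product']; rfl
  have hB : ∑ p : Fin a × Fin b, B p.1 p.2 ^ 2 = ‖B‖ ^ 2 := by
    rw [frob_norm_sq, ← Finset.sum_product']; rfl
  have hd : ∑ i, ∑ j, A i j * B i j = ∑ p : Fin a × Fin b, A p.1 p.2 * B p.1 p.2 := by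
    rw [← Finset.sum_product']; rfl
  rw [hd]
  nlinarith [norm_nonneg A, norm_nonneg B, Finset.sum_mul_sq_le_sq_mul_sq Finset.univ
    (fun p : Fin a × Fin b => A p.1 p.2) (fun p => B p.1 p.2), hA, hB,
    mul_nonneg (norm_nonneg A) (norm_nonneg B)]

lemma frob_sub_sq {a b : ℕ} (A B : Matrix (Fin a) (Fin b) ℝ) :
    ‖A - B‖ ^ 2 = ‖A‖ ^ 2 - 2 * (∑ i, ∑ j, A i j * B i j) + ‖B‖ ^ 2 := by
  have h : ∀ i j, (A i j - B i j)^2 = A i j^2 - 2*(A i j * B i j) + B i j ^2 := by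
    intros; ring
  simp_rw [frob_norm_sq, Matrix.sub_apply, h, Finset.sum_add_distrib,
    Finset.sum_sub_distrib, Finset.mul_sum]

-- projection lemma
lemma proj_closer {a b : ℕ} {σ : ℝ} (hσ : 0 < σ) (U c : Matrix (Fin a) (Fin b) ℝ)
    (hU : ‖U‖ ≤ σ) (hc : ¬ ‖c‖ ≤ σ) :
    ‖U - (σ / ‖c‖) • c‖ ≤ ‖U - c‖ := by
  push_neg at hc
  have hcpos : 0 < ‖c‖ := lt_trans hσ hc
  set t : ℝ := σ / ‖c‖ with ht
  have ht0 : 0 < t := div_pos hσ hcpos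
  have ht1 : t < 1 := (div_lt_one hcpos).2 hc
  have habs : ‖U - t • c‖ ^ 2 ≤ ‖U - c‖ ^ 2 := by
    have h1 := frob_sub_sq U (t • c)
    have h2 := frob_sub_sq U c
    have hsmul : ∀ i j, (t • c) i j = t * c i j := fun i j => rfl
    have hsd : (∑ i, ∑ j, U i j * (t • c) i j) = t * ∑ i, ∑ j, U i j * c i j := by
      simp only [hsmul, Finset.mul_sum]; congr 1; ext i; congr 1; ext j; ring
    have hnt : ‖t • c‖ = t * ‖c‖ := by
      rw [norm_smul, Real.norm_eq_abs, abs_of_pos ht0]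
    have hdle : (∑ i, ∑ j, U i j * c i j) ≤ σ * ‖c‖ := by
      calc (∑ i, ∑ j, U i j * c i j) ≤ ‖U‖ * ‖c‖ := frob_dot_le U c
        _ ≤ σ * ‖c‖ := by nlinarith
    have hts : t * ‖c‖ = σ := div_mul_cancel₀ σ (ne_of_gt hcpos)
    rw [h1, h2, hsd, hnt]
    nlinarith
  calc ‖U - t • c‖ = Real.sqrt (‖U - t • c‖ ^ 2) := (Real.sqrt_sq (norm_nonneg _)).symm
    _ ≤ Real.sqrt (‖U - c‖ ^ 2) := Real.sqrt_le_sqrt habs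
    _ = ‖U - c‖ := Real.sqrt_sq (norm_nonneg _)

lemma norm_mul_diag {a r : ℕ} {ε : Fin r → ℝ} (hε : ∀ i, ε i = 1 ∨ ε i = -1)
    (A : Matrix (Fin a) (Fin r) ℝ) : ‖A * Matrix.diagonal ε‖ = ‖A‖ := by
  have hsq : ‖A * Matrix.diagonal ε‖ ^ 2 = ‖A‖ ^ 2 := by
    simp only [frob_norm_sq, Matrix.mul_diagonal]
    refine Finset.sum_congr rfl fun i _ => Finset.sum_congr rfl fun j _ => ?_
    rcases hε j with h | h <;> rw [h] <;> ring
  have h1 := norm_nonneg (A * Matrix.diagonal ε)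
  have h2 := norm_nonneg A
  nlinarith

lemma lipschitz_est {a r : ℕ} {ε : Fin r → ℝ} (hε : ∀ i, ε i = 1 ∨ ε i = -1)
    (U V : Matrix (Fin a) (Fin r) ℝ) :
    ‖U * Matrix.diagonal ε * Uᵀ - V * Matrix.diagonal ε * Vᵀ‖ ≤ (‖U‖ + ‖V‖) * ‖U - V‖ := by
  have hid : U * Matrix.diagonal ε * Uᵀ - V * Matrix.diagonal ε * Vᵀ
      = U * Matrix.diagonal ε * (U - V)ᵀ + (U - V) * Matrix.diagonal ε * Vᵀ := by
    simp only [Matrix.transpose_sub, Matrix.sub_mul, Matrix.mul_sub]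
    abel
  rw [hid]
  calc ‖U * Matrix.diagonal ε * (U - V)ᵀ + (U - V) * Matrix.diagonal ε * Vᵀ‖
      ≤ ‖U * Matrix.diagonal ε * (U - V)ᵀ‖ + ‖(U - V) * Matrix.diagonal ε * Vᵀ‖ :=
        norm_add_le _ _
    _ ≤ ‖U * Matrix.diagonal ε‖ * ‖(U - V)ᵀ‖ + ‖(U - V) * Matrix.diagonal ε‖ * ‖Vᵀ‖ := by
        gcongr <;> exact Matrix.frobenius_norm_mul _ _
    _ = ‖U‖ * ‖U - V‖ + ‖U - V‖ * ‖V‖ := by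
        rw [norm_mul_diag hε, norm_mul_diag hε, Matrix.frobenius_norm_transpose,
          Matrix.frobenius_norm_transpose]
    _ = (‖U‖ + ‖V‖) * ‖U - V‖ := by ring



/-- covering number of a set of symmetric products `U Λ Uᵀ`
with `Λ` a diagonal `±1` matrix. -/
theorem covering_symm_product {n r : ℕ} (σ : ℝ) (hσ : 0 < σ)
    (ΩU : Set (Matrix (Fin n) (Fin r) ℝ)) (hUne : ΩU.Nonempty)
    (hUb : ΩU ⊆ Metric.closedBall 0 σ)
    (ε : Fin r → ℝ) (hε : ∀ i, ε i = 1 ∨ ε i = -1)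
    (ΩB : Set (Matrix (Fin n) (Fin n) ℝ))
    (hB : ΩB ⊆ {X | ∃ U ∈ ΩU, X = U * Matrix.diagonal ε * Uᵀ})
    (ρ : ℝ) (hρ : 0 < ρ) :
    coveringNumber ΩB ρ ≤ coveringNumber ΩU (ρ / (2 * σ)) := by
  set τ : ℝ := ρ / (2 * σ) with hτdef
  have hτ : 0 < τ := div_pos hρ (by linarith)
  -- the set of cover sizes for ΩU is nonempty
  have hSne : {k : ℕ | ∃ C : Finset (Matrix (Fin n) (Fin r) ℝ), C.card = k ∧
      ΩU ⊆ ⋃ c ∈ C, Metric.closedBall c τ}.Nonempty := by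
    have htb : TotallyBounded ΩU :=
      TotallyBounded.subset hUb (isCompact_closedBall (0 : Matrix (Fin n) (Fin r) ℝ) σ).totallyBounded
    obtain ⟨t, htfin, htcov⟩ := Metric.totallyBounded_iff.mp htb τ hτ
    refine ⟨htfin.toFinset.card, htfin.toFinset, rfl, ?_⟩
    refine htcov.trans ?_
    refine Set.iUnion₂_subset fun c hc => ?_
    refine Set.subset_iUnion₂_of_subset c (htfin.mem_toFinset.mpr hc) Metric.ball_subset_closedBall
  -- extract an optimal cover of ΩU
  obtain ⟨C, hCcard, hCcov⟩ := Nat.sInf_mem hSne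
  -- projection onto the σ-ball
  set π : Matrix (Fin n) (Fin r) ℝ → Matrix (Fin n) (Fin r) ℝ :=
    fun c => if ‖c‖ ≤ σ then c else (σ / ‖c‖) • c with hπ
  have hπnorm : ∀ c, ‖π c‖ ≤ σ := by
    intro c
    by_cases h : ‖c‖ ≤ σ
    · simpa [hπ, h] using h
    · push_neg at h
      have hcpos : 0 < ‖c‖ := lt_trans hσ h
      simp only [hπ, if_neg (not_le.mpr h)]
      rw [norm_smul, Real.norm_eq_abs, abs_of_pos (div_pos hσ hcpos),
        div_mul_cancel₀ σ (ne_of_gt hcpos)]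
  have hπclose : ∀ (U c : Matrix (Fin n) (Fin r) ℝ), ‖U‖ ≤ σ → ‖U - π c‖ ≤ ‖U - c‖ := by
    intro U c hU
    by_cases h : ‖c‖ ≤ σ
    · simp [hπ, h]
    · simp only [hπ, if_neg h]
      exact proj_closer hσ U c hU h
  -- image cover of ΩB
  set f : Matrix (Fin n) (Fin r) ℝ → Matrix (Fin n) (Fin n) ℝ :=
    fun c => π c * Matrix.diagonal ε * (π c)ᵀ with hf
  have hcov : ΩB ⊆ ⋃ d ∈ C.image f, Metric.closedBall d ρ := by
    intro X hX
    obtain ⟨U, hUΩ, rfl⟩ := hB hX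
    have hUσ : ‖U‖ ≤ σ := by
      have := hUb hUΩ
      rwa [Metric.mem_closedBall, dist_zero_right] at this
    have : U ∈ ⋃ c ∈ C, Metric.closedBall c τ := hCcov hUΩ
    rw [Set.mem_iUnion₂] at this
    obtain ⟨c, hcC, hUc⟩ := this
    rw [Metric.mem_closedBall, dist_eq_norm] at hUc
    refine Set.mem_iUnion₂.mpr ⟨f c, Finset.mem_image_of_mem f hcC, ?_⟩
    rw [Metric.mem_closedBall, dist_eq_norm]
    have key : ‖U * Matrix.diagonal ε * Uᵀ - f c‖ ≤ (‖U‖ + ‖π c‖) * ‖U - π c‖ :=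
      lipschitz_est hε U (π c)
    have h1 : ‖U - π c‖ ≤ τ := le_trans (hπclose U c hUσ) hUc
    have h2 : ‖U‖ + ‖π c‖ ≤ 2 * σ := by
      have := hπnorm c; linarith
    calc ‖U * Matrix.diagonal ε * Uᵀ - f c‖ ≤ (‖U‖ + ‖π c‖) * ‖U - π c‖ := key
      _ ≤ (2 * σ) * τ := by
          apply mul_le_mul h2 h1 (norm_nonneg _)
          linarith
      _ = ρ := by
          rw [hτdef]
          field_simp
  have hmem : (C.image f).card ∈ {k : ℕ | ∃ D : Finset (Matrix (Fin n) (Fin n) ℝ),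
      D.card = k ∧ ΩB ⊆ ⋃ d ∈ D, Metric.closedBall d ρ} := ⟨C.image f, rfl, hcov⟩
  calc coveringNumber ΩB ρ ≤ (C.image f).card := Nat.sInf_le hmem
    _ ≤ C.card := Finset.card_image_le
    _ = coveringNumber ΩU τ := hCcard
end

section
/- Let Ω_B = {X ∈ ℝ^{n×n} : X = Xᵀ, rank(X) ≤ r, ‖X‖_F ≤ 1} be the set of symmetric matrices of rank at most r in the Frobenius unit ball. Then for every 0 < ρ < 1 the covering number satisfies N_{Ω_B}(ρ) ≤ (r+1) · (6√r / ρ)^{n r}. -/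
open Matrix

attribute [local instance] Matrix.frobeniusNormedAddCommGroup

open Metric MeasureTheory
open scoped ENNReal NNReal

lemma card_le_of_separated {E : Type*} [NormedAddCommGroup E] [NormedSpace ℝ E]
    [FiniteDimensional ℝ E] {R ε : ℝ} (hR : 0 ≤ R) (hε : 0 < ε)
    (S : Finset E) (hS : ↑S ⊆ closedBall (0:E) R)
    (hsep : ∀ x ∈ S, ∀ y ∈ S, x ≠ y → ε < dist x y) :
    (S.card : ℝ) ≤ (1 + 2 * R / ε) ^ (Module.finrank ℝ E) := by
  have hbase : (1:ℝ) ≤ 1 + 2 * R / ε := le_add_of_nonneg_right (by positivity)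
  rcases subsingleton_or_nontrivial E with hE | hE
  · have : S.card ≤ 1 := Finset.card_le_one.2 (fun a _ b _ => Subsingleton.elim a b)
    calc (S.card : ℝ) ≤ 1 := by exact_mod_cast this
      _ ≤ (1 + 2 * R / ε) ^ (Module.finrank ℝ E) := one_le_pow₀ hbase
  · letI : MeasurableSpace E := borel E
    haveI : BorelSpace E := ⟨rfl⟩
    set d := Module.finrank ℝ E with hd
    let μ : Measure E := (Module.finBasis ℝ E).addHaar
    -- small balls are disjoint
    have hdisj : (↑S : Set E).Pairwise (Function.onFun Disjoint fun c => closedBall c (ε/2)) := by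
      intro x hx y hy hxy
      apply closedBall_disjoint_closedBall
      have := hsep x hx y hy hxy
      linarith
    have hmeas : ∀ c ∈ S, MeasurableSet (closedBall c (ε/2)) :=
      fun c _ => measurableSet_closedBall
    have hunion : (⋃ c ∈ S, closedBall c (ε/2)) ⊆ closedBall (0:E) (R + ε/2) := by
      intro z hz
      simp only [Set.mem_iUnion] at hz
      obtain ⟨c, hc, hzc⟩ := hz
      have hc' := hS hc
      simp only [mem_closedBall] at *
      calc dist z 0 ≤ dist z c + dist c 0 := dist_triangle _ _ _
        _ ≤ R + ε/2 := by linarith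
    have key : (S.card : ℝ≥0∞) * μ (closedBall 0 (ε/2)) ≤ μ (closedBall (0:E) (R + ε/2)) := by
      calc (S.card : ℝ≥0∞) * μ (closedBall 0 (ε/2))
          = ∑ c ∈ S, μ (closedBall c (ε/2)) := by
            rw [Finset.sum_congr rfl (fun c _ => Measure.addHaar_closedBall_center μ c (ε/2)),
              Finset.sum_const, nsmul_eq_mul, Measure.addHaar_closedBall_center μ 0 (ε/2)]
        _ = μ (⋃ c ∈ S, closedBall c (ε/2)) :=
            (measure_biUnion_finset hdisj hmeas).symm
        _ ≤ μ (closedBall (0:E) (R + ε/2)) := measure_mono hunion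
    rw [Measure.addHaar_closedBall μ _ (by positivity), Measure.addHaar_closedBall μ _ (by positivity)] at key
    have hb : μ (ball (0:E) 1) ≠ 0 := (measure_ball_pos μ _ one_pos).ne'
    have hb' : μ (ball (0:E) 1) ≠ ⊤ := measure_ball_lt_top.ne
    have key2 : (S.card : ℝ≥0∞) * ENNReal.ofReal ((ε/2) ^ d) ≤ ENNReal.ofReal ((R + ε/2) ^ d) := by
      rw [← mul_assoc] at key
      exact (ENNReal.mul_le_mul_iff_left hb hb').1 key
    have hsmall : ENNReal.ofReal ((ε/2) ^ d) ≠ 0 := by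
      simp [ENNReal.ofReal_eq_zero, not_le]
      positivity
    have hsmall' : ENNReal.ofReal ((ε/2) ^ d) ≠ ⊤ := ENNReal.ofReal_ne_top
    have factor : ((R + ε/2) ^ d : ℝ) = (ε/2) ^ d * (1 + 2 * R / ε) ^ d := by
      rw [← mul_pow]
      congr 1
      field_simp
      ring
    have key3 : (S.card : ℝ≥0∞) ≤ ENNReal.ofReal ((1 + 2 * R / ε) ^ d) := by
      rw [← ENNReal.le_div_iff_mul_le (Or.inl hsmall) (Or.inl hsmall')] at key2
      refine key2.trans ?_
      rw [ENNReal.div_le_iff hsmall hsmall', ← ENNReal.ofReal_mul (by positivity), factor]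
      exact le_of_eq (by rw [mul_comm])
    have hcast : ENNReal.ofReal (S.card : ℝ) ≤ ENNReal.ofReal ((1 + 2 * R / ε) ^ d) := by
      rwa [ENNReal.ofReal_natCast]
    exact (ENNReal.ofReal_le_ofReal_iff (by positivity)).1 hcast

lemma exists_net {E : Type*} [NormedAddCommGroup E] [NormedSpace ℝ E]
    [FiniteDimensional ℝ E] {R ε : ℝ} (hR : 0 ≤ R) (hε : 0 < ε) :
    ∃ C : Finset E, ↑C ⊆ closedBall (0:E) R ∧
      (C.card : ℝ) ≤ (1 + 2 * R / ε) ^ (Module.finrank ℝ E) ∧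
      closedBall (0:E) R ⊆ ⋃ c ∈ C, closedBall c ε := by
  classical
  set B : ℝ := (1 + 2 * R / ε) ^ (Module.finrank ℝ E) with hB
  set 𝒮 : Set (Finset E) :=
    {S | ↑S ⊆ closedBall (0:E) R ∧ ∀ x ∈ S, ∀ y ∈ S, x ≠ y → ε < dist x y} with h𝒮
  set A : Set ℕ := Finset.card '' 𝒮 with hA
  have hA0 : (0:ℕ) ∈ A := ⟨∅, ⟨by simp, by simp⟩, rfl⟩
  have hmemb : ∀ k ∈ A, k ≤ ⌈B⌉₊ := by
    rintro k ⟨S, hS, rfl⟩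
    exact Nat.cast_le.mp (le_trans (card_le_of_separated hR hε S hS.1 hS.2) (Nat.le_ceil _))
  have hbdd : BddAbove A := ⟨⌈B⌉₊, hmemb⟩
  obtain ⟨S, hS, hcard⟩ := Nat.sSup_mem ⟨0, hA0⟩ hbdd
  refine ⟨S, hS.1, card_le_of_separated hR hε S hS.1 hS.2, ?_⟩
  intro x hx
  by_contra hcov
  simp only [Set.mem_iUnion, mem_closedBall, not_exists, not_and, not_le] at hcov
  have hxS : x ∉ S := by
    intro h
    have := hcov x h
    simp only [dist_self] at this
    linarith
  have hT : insert x S ∈ 𝒮 := by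
    constructor
    · intro y hy
      rcases Finset.mem_insert.mp hy with h | h
      · exact h ▸ hx
      · exact hS.1 h
    · intro a ha b hb hab
      rcases Finset.mem_insert.mp ha with h | h <;> rcases Finset.mem_insert.mp hb with h' | h'
      · exact absurd (h.trans h'.symm) hab
      · subst h; exact hcov b h'
      · subst h'; rw [dist_comm]; exact hcov a h
      · exact hS.2 a h b h' hab
  have : (insert x S).card ≤ sSup A := le_csSup hbdd ⟨_, hT, rfl⟩
  rw [Finset.card_insert_of_notMem hxS, hcard] at this
  omega



lemma frob_sq_eq {m' n' : Type*} [Fintype m'] [Fintype n'] (M : Matrix m' n' ℝ) :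
    ‖M‖ ^ 2 = ∑ i, ∑ j, (M i j) ^ 2 := by
  have hx : (0:ℝ) ≤ ∑ i, ∑ j, ‖M i j‖ ^ (2:ℝ) := by positivity
  rw [Matrix.frobenius_norm_def, ← Real.rpow_natCast _ 2, ← Real.rpow_mul hx]
  norm_num

lemma frob_sq_trace {m' n' : Type*} [Fintype m'] [Fintype n'] (M : Matrix m' n' ℝ) :
    ‖M‖ ^ 2 = Matrix.trace (Mᵀ * M) := by
  rw [frob_sq_eq, Matrix.trace]
  simp only [Matrix.diag_apply, Matrix.mul_apply, Matrix.transpose_apply]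
  rw [Finset.sum_comm]
  congr 1; ext i; congr 1; ext j; ring

lemma decomp {n r : ℕ} {X : Matrix (Fin n) (Fin n) ℝ} (hsymm : X = Xᵀ) (hrank : X.rank ≤ r)
    (hnorm : ‖X‖ ≤ 1) :
    ∃ (k : ℕ) (W : Matrix (Fin n) (Fin r) ℝ), k ≤ r ∧ ‖W‖ ≤ Real.sqrt (Real.sqrt r) ∧
      X = W * (Matrix.diagonal (fun j : Fin r => if (j:ℕ) < k then (1:ℝ) else -1)) * Wᵀ := by
  classical
  have hX : X.IsHermitian := by
    rw [Matrix.IsHermitian, Matrix.conjTranspose_eq_transpose_of_trivial, ← hsymm]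
  set lam : Fin n → ℝ := hX.eigenvalues with hlam
  set V : Matrix (Fin n) (Fin n) ℝ := (hX.eigenvectorUnitary : Matrix (Fin n) (Fin n) ℝ) with hV
  have hVV : Vᵀ * V = 1 := by
    rw [← Matrix.conjTranspose_eq_transpose_of_trivial, ← Matrix.star_eq_conjTranspose]
    exact Unitary.coe_star_mul_self hX.eigenvectorUnitary
  have hVV' : V * Vᵀ = 1 := by
    rw [← Matrix.conjTranspose_eq_transpose_of_trivial, ← Matrix.star_eq_conjTranspose]
    exact Unitary.coe_mul_star_self hX.eigenvectorUnitary
  have hspec : X = V * Matrix.diagonal lam * Vᵀ := by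
    have := hX.spectral_theorem
    rw [← Matrix.conjTranspose_eq_transpose_of_trivial, ← Matrix.star_eq_conjTranspose]
    convert this using 2
    rw [Unitary.conjStarAlgAut_apply]; rfl
  -- eigenvalue index sets
  set s : Finset (Fin n) := Finset.univ.filter (fun i => 0 < lam i) with hs
  set t : Finset (Fin n) := Finset.univ.filter (fun i => lam i < 0) with ht
  set u : Finset (Fin n) := Finset.univ.filter (fun i => lam i ≠ 0) with hu
  have hst : Disjoint s t := by
    rw [Finset.disjoint_left]
    intro a ha ha'
    simp only [hs, ht, Finset.mem_filter] at ha ha'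
    linarith [ha.2, ha'.2]
  have hstu : s ∪ t = u := by
    ext i
    simp only [hs, ht, hu, Finset.mem_union, Finset.mem_filter, Finset.mem_univ, true_and]
    constructor
    · rintro (h | h) <;> intro h' <;> simp [h'] at h
    · intro h
      rcases lt_trichotomy (lam i) 0 with h' | h' | h'
      · exact Or.inr h'
      · exact absurd h' h
      · exact Or.inl h'
  have hcardu : u.card = X.rank := by
    rw [hX.rank_eq_card_non_zero_eigs, Fintype.card_subtype]
  set p : ℕ := s.card with hp
  set q : ℕ := t.card with hq
  have hpq : p + q ≤ r := by
    rw [hp, hq, ← Finset.card_union_of_disjoint hst, hstu, hcardu]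
    exact hrank
  -- index assignment
  set idx : Fin r → Option (Fin n) := fun j =>
    if h : (j:ℕ) < p then some ((s.equivFin.symm ⟨j, h⟩ : s) : Fin n)
    else if h' : (j:ℕ) < p + q then
      some ((t.equivFin.symm ⟨(j:ℕ) - p, by omega⟩ : t) : Fin n)
    else none with hidx
  have f1 : ∀ j i, idx j = some i →
      (((j:ℕ) < p ∧ i ∈ s) ∨ ((p ≤ (j:ℕ) ∧ (j:ℕ) < p + q) ∧ i ∈ t)) := by
    intro j i hji
    by_cases h : (j:ℕ) < p
    · left
      refine ⟨h, ?_⟩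
      simp only [hidx, dif_pos h, Option.some.injEq] at hji
      rw [← hji]
      exact (s.equivFin.symm ⟨j, h⟩).2
    · right
      by_cases h' : (j:ℕ) < p + q
      · refine ⟨⟨by omega, h'⟩, ?_⟩
        simp only [hidx, dif_neg h, dif_pos h', Option.some.injEq] at hji
        rw [← hji]
        exact (t.equivFin.symm ⟨(j:ℕ) - p, by omega⟩).2
      · simp only [hidx, dif_neg h, dif_neg h', reduceCtorEq] at hji
  have f2 : ∀ j j' i, idx j = some i → idx j' = some i → j = j' := by
    intro j j' i hj hj'
    rcases f1 j i hj with ⟨h1, hi1⟩ | ⟨h1, hi1⟩ <;>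
      rcases f1 j' i hj' with ⟨h2, hi2⟩ | ⟨h2, hi2⟩
    · simp only [hidx, dif_pos h1, Option.some.injEq] at hj
      simp only [hidx, dif_pos h2, Option.some.injEq] at hj'
      have : s.equivFin.symm ⟨j, h1⟩ = s.equivFin.symm ⟨j', h2⟩ :=
        Subtype.ext (hj.trans hj'.symm)
      have h3 := s.equivFin.symm.injective this
      have hval : ((⟨(j:ℕ), h1⟩ : Fin p) : ℕ) = ((⟨(j':ℕ), h2⟩ : Fin p) : ℕ) := congrArg Fin.val h3
      exact Fin.ext hval
    · exact absurd hi1 (Finset.disjoint_left.mp hst · hi2)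
    · exact absurd hi2 (Finset.disjoint_left.mp hst · hi1)
    · simp only [hidx, dif_neg (by omega : ¬ (j:ℕ) < p), dif_pos h1.2, Option.some.injEq] at hj
      simp only [hidx, dif_neg (by omega : ¬ (j':ℕ) < p), dif_pos h2.2, Option.some.injEq] at hj'
      have : t.equivFin.symm ⟨(j:ℕ) - p, by omega⟩ = t.equivFin.symm ⟨(j':ℕ) - p, by omega⟩ :=
        Subtype.ext (hj.trans hj'.symm)
      have := t.equivFin.symm.injective this
      have := congrArg Fin.val this
      simp only at this
      have h1' := h1.1
      have h2' := h2.1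
      exact Fin.ext (by omega)
  have f3 : ∀ i, i ∈ s → ∃ j : Fin r, idx j = some i := by
    intro i hi
    have hlt : ((s.equivFin ⟨i, hi⟩ : Fin p) : ℕ) < p := (s.equivFin ⟨i, hi⟩).2
    refine ⟨⟨(s.equivFin ⟨i, hi⟩ : Fin p), by omega⟩, ?_⟩
    simp only [hidx, dif_pos hlt, Option.some.injEq]
    have : (⟨((s.equivFin ⟨i, hi⟩ : Fin p) : ℕ), hlt⟩ : Fin p) = s.equivFin ⟨i, hi⟩ :=
      Fin.ext rfl
    rw [this, Equiv.symm_apply_apply]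
  have f4 : ∀ i, i ∈ t → ∃ j : Fin r, idx j = some i := by
    intro i hi
    have hlt : ((t.equivFin ⟨i, hi⟩ : Fin q) : ℕ) < q := (t.equivFin ⟨i, hi⟩).2
    refine ⟨⟨p + (t.equivFin ⟨i, hi⟩ : Fin q), by omega⟩, ?_⟩
    simp only [hidx, dif_neg (by omega : ¬ p + ((t.equivFin ⟨i, hi⟩ : Fin q) : ℕ) < p),
      dif_pos (by omega : p + ((t.equivFin ⟨i, hi⟩ : Fin q) : ℕ) < p + q), Option.some.injEq]
    have : (⟨p + ((t.equivFin ⟨i, hi⟩ : Fin q) : ℕ) - p, by omega⟩ : Fin q) = t.equivFin ⟨i, hi⟩ := by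
      apply Fin.ext
      show p + ((t.equivFin ⟨i, hi⟩ : Fin q) : ℕ) - p = ((t.equivFin ⟨i, hi⟩ : Fin q) : ℕ)
      omega
    rw [this, Equiv.symm_apply_apply]
  -- the matrices
  set d : Fin r → ℝ := fun j => if (j:ℕ) < p then (1:ℝ) else -1 with hd
  set P : Matrix (Fin n) (Fin r) ℝ := Matrix.of (fun i j =>
    if idx j = some i then Real.sqrt |lam i| else 0) with hP
  -- key sign fact
  have fsign : ∀ j i, idx j = some i → d j * |lam i| = lam i := by
    intro j i hji
    rcases f1 j i hji with ⟨h1, hi1⟩ | ⟨h1, hi1⟩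
    · simp only [hd, if_pos h1, one_mul]
      simp only [hs, Finset.mem_filter] at hi1
      exact abs_of_pos hi1.2
    · simp only [hd, if_neg (by omega : ¬ (j:ℕ) < p)]
      simp only [ht, Finset.mem_filter] at hi1
      rw [abs_of_neg hi1.2]
      ring
  -- P * diagonal d * Pᵀ = diagonal lam
  have habs : ∀ i : Fin n, Real.sqrt |lam i| * Real.sqrt |lam i| = |lam i| :=
    fun i => Real.mul_self_sqrt (abs_nonneg _)
  have hPDP : P * Matrix.diagonal d * Pᵀ = Matrix.diagonal lam := by
    ext i i'
    rw [Matrix.mul_apply]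
    simp only [Matrix.mul_diagonal, Matrix.transpose_apply]
    by_cases hii : i = i'
    · subst hii
      rw [Matrix.diagonal_apply_eq]
      by_cases hne : lam i ≠ 0
      · have hiu : i ∈ s ∪ t := by rw [hstu]; simp [hu, hne]
        obtain ⟨j₀, hj₀⟩ : ∃ j, idx j = some i := by
          rcases Finset.mem_union.mp hiu with h | h
          exacts [f3 i h, f4 i h]
        rw [Finset.sum_eq_single j₀]
        · simp only [hP, Matrix.of_apply, if_pos hj₀]
          calc Real.sqrt |lam i| * d j₀ * Real.sqrt |lam i|
              = d j₀ * (Real.sqrt |lam i| * Real.sqrt |lam i|) := by ring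
            _ = d j₀ * |lam i| := by rw [habs i]
            _ = lam i := fsign j₀ i hj₀
        · intro j _ hjne
          simp only [hP, Matrix.of_apply]
          by_cases hj : idx j = some i
          · exact absurd (f2 j j₀ i hj hj₀) hjne
          · rw [if_neg hj]; ring
        · intro h; exact absurd (Finset.mem_univ j₀) h
      · push_neg at hne
        rw [hne]
        apply Finset.sum_eq_zero
        intro j _
        simp only [hP, Matrix.of_apply]
        by_cases hj : idx j = some i
        · rw [if_pos hj, hne, abs_zero, Real.sqrt_zero]; ring
        · rw [if_neg hj]; ring
    · rw [Matrix.diagonal_apply_ne _ hii]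
      apply Finset.sum_eq_zero
      intro j _
      simp only [hP, Matrix.of_apply]
      by_cases hj : idx j = some i
      · by_cases hj' : idx j = some i'
        · exact absurd (Option.some.inj (hj.symm.trans hj')) hii
        · rw [if_neg hj']; ring
      · rw [if_neg hj]; ring
  -- the factorization
  have hWX : X = (V * P) * Matrix.diagonal d * (V * P)ᵀ := by
    rw [Matrix.transpose_mul, hspec, ← hPDP]
    simp only [Matrix.mul_assoc]
  -- norm of V * P equals norm of P
  have hnormVP : ‖V * P‖ ^ 2 = ‖P‖ ^ 2 := by
    rw [frob_sq_trace, frob_sq_trace, Matrix.transpose_mul]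
    congr 1
    calc Pᵀ * Vᵀ * (V * P) = Pᵀ * (Vᵀ * V) * P := by simp only [Matrix.mul_assoc]
      _ = Pᵀ * P := by rw [hVV, Matrix.mul_one]
  -- norm of P
  have hrow : ∀ i : Fin n, ∑ j, (P i j)^2 = |lam i| := by
    intro i
    by_cases hne : lam i ≠ 0
    · have hiu : i ∈ s ∪ t := by rw [hstu]; simp [hu, hne]
      obtain ⟨j₀, hj₀⟩ : ∃ j, idx j = some i := by
        rcases Finset.mem_union.mp hiu with h | h
        exacts [f3 i h, f4 i h]
      rw [Finset.sum_eq_single j₀]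
      · simp only [hP, Matrix.of_apply, if_pos hj₀]
        rw [sq, habs i]
      · intro j _ hjne
        simp only [hP, Matrix.of_apply]
        by_cases hj : idx j = some i
        · exact absurd (f2 j j₀ i hj hj₀) hjne
        · rw [if_neg hj]; ring
      · intro h; exact absurd (Finset.mem_univ j₀) h
    · push_neg at hne
      rw [hne, abs_zero]
      apply Finset.sum_eq_zero
      intro j _
      simp only [hP, Matrix.of_apply]
      by_cases hj : idx j = some i
      · rw [if_pos hj, hne, abs_zero, Real.sqrt_zero]; ring
      · rw [if_neg hj]; ring
  have hPsq : ‖P‖ ^ 2 = ∑ i ∈ u, |lam i| := by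
    rw [frob_sq_eq]
    rw [Finset.sum_congr rfl (fun i _ => hrow i)]
    symm
    apply Finset.sum_filter_of_ne
    intro x _ hx
    intro h
    rw [h, abs_zero] at hx
    exact hx rfl
  -- Frobenius norm of X in terms of eigenvalues
  have hXsq : ‖X‖ ^ 2 = ∑ i, (lam i)^2 := by
    rw [frob_sq_trace, ← hsymm]
    have hXX : X * X = V * (Matrix.diagonal lam * Matrix.diagonal lam) * Vᵀ := by
      conv_lhs => rw [hspec]
      calc (V * Matrix.diagonal lam * Vᵀ) * (V * Matrix.diagonal lam * Vᵀ)
          = V * (Matrix.diagonal lam * ((Vᵀ * V) * (Matrix.diagonal lam * Vᵀ))) := by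
            simp only [Matrix.mul_assoc]
        _ = V * (Matrix.diagonal lam * Matrix.diagonal lam) * Vᵀ := by
            rw [hVV, Matrix.one_mul]; simp only [Matrix.mul_assoc]
    rw [hXX, Matrix.trace_mul_cycle, ← Matrix.mul_assoc, hVV, Matrix.one_mul,
      Matrix.diagonal_mul_diagonal, Matrix.trace_diagonal]
    exact Finset.sum_congr rfl (fun i _ => (sq (lam i)).symm)
  -- Cauchy-Schwarz bound
  have hsum_sq : ∑ i ∈ u, (lam i)^2 ≤ 1 := by
    calc ∑ i ∈ u, (lam i)^2 ≤ ∑ i, (lam i)^2 :=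
          Finset.sum_le_sum_of_subset_of_nonneg (Finset.subset_univ u)
            (fun i _ _ => sq_nonneg _)
      _ = ‖X‖ ^ 2 := hXsq.symm
      _ ≤ 1 := by nlinarith [norm_nonneg X]
  have hcardr : (u.card : ℝ) ≤ r := by
    exact_mod_cast hcardu ▸ hrank
  have hCS : (∑ i ∈ u, |lam i|) ^ 2 ≤ (r : ℝ) := by
    calc (∑ i ∈ u, |lam i|) ^ 2 ≤ (u.card : ℝ) * ∑ i ∈ u, |lam i| ^ 2 := by
          exact_mod_cast sq_sum_le_card_mul_sum_sq (s := u) (f := fun i => |lam i|)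
      _ = (u.card : ℝ) * ∑ i ∈ u, (lam i)^2 := by
          congr 1; exact Finset.sum_congr rfl (fun i _ => sq_abs _)
      _ ≤ (r : ℝ) * 1 := by
          apply mul_le_mul hcardr hsum_sq (Finset.sum_nonneg (fun i _ => sq_nonneg _))
            (Nat.cast_nonneg r)
      _ = r := mul_one _
  have hsum_abs : ∑ i ∈ u, |lam i| ≤ Real.sqrt r := by
    have h0 : (0:ℝ) ≤ ∑ i ∈ u, |lam i| := Finset.sum_nonneg (fun i _ => abs_nonneg _)
    nlinarith [Real.sq_sqrt (Nat.cast_nonneg r : (0:ℝ) ≤ r), Real.sqrt_nonneg (r:ℝ)]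
  have hnormW : ‖V * P‖ ≤ Real.sqrt (Real.sqrt r) := by
    have h1 : ‖V * P‖ ^ 2 ≤ Real.sqrt r := by
      rw [hnormVP, hPsq]; exact hsum_abs
    nlinarith [Real.sq_sqrt (Real.sqrt_nonneg (r:ℝ)), Real.sqrt_nonneg (Real.sqrt (r:ℝ)),
      norm_nonneg (V * P)]
  exact ⟨p, V * P, by omega, hnormW, hWX⟩

attribute [local instance] Matrix.frobeniusNormedSpace

lemma norm_mul_diagonal_sign {m' : Type*} [Fintype m'] {r : ℕ} (M : Matrix m' (Fin r) ℝ)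
    (d : Fin r → ℝ) (hd : ∀ j, |d j| = 1) : ‖M * Matrix.diagonal d‖ = ‖M‖ := by
  rw [Matrix.frobenius_norm_def, Matrix.frobenius_norm_def]
  congr 1
  apply Finset.sum_congr rfl
  intro i _
  apply Finset.sum_congr rfl
  intro j _
  rw [Matrix.mul_diagonal, Real.norm_eq_abs, Real.norm_eq_abs, abs_mul, hd j, mul_one]

lemma lip {n r : ℕ} (W U : Matrix (Fin n) (Fin r) ℝ) (d : Fin r → ℝ) (hd : ∀ j, |d j| = 1) :
    ‖W * Matrix.diagonal d * Wᵀ - U * Matrix.diagonal d * Uᵀ‖ ≤ (‖W‖ + ‖U‖) * ‖W - U‖ := by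
  set D := Matrix.diagonal d with hD
  have key : W * D * Wᵀ - U * D * Uᵀ = (W - U) * D * Wᵀ + U * D * (W - U)ᵀ := by
    rw [Matrix.transpose_sub, Matrix.sub_mul, Matrix.sub_mul, Matrix.mul_sub]
    abel
  rw [key]
  calc ‖(W - U) * D * Wᵀ + U * D * (W - U)ᵀ‖
      ≤ ‖(W - U) * D * Wᵀ‖ + ‖U * D * (W - U)ᵀ‖ := norm_add_le _ _
    _ ≤ ‖(W - U) * D‖ * ‖Wᵀ‖ + ‖U * D‖ * ‖(W - U)ᵀ‖ :=
        add_le_add (Matrix.frobenius_norm_mul _ _) (Matrix.frobenius_norm_mul _ _)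
    _ = ‖W - U‖ * ‖W‖ + ‖U‖ * ‖W - U‖ := by
        rw [norm_mul_diagonal_sign _ _ hd, norm_mul_diagonal_sign _ _ hd,
          Matrix.frobenius_norm_transpose, Matrix.frobenius_norm_transpose]
    _ = (‖W‖ + ‖U‖) * ‖W - U‖ := by ring

lemma coveringNumber_le_of_cover {E : Type*} [PseudoMetricSpace E] {Ω : Set E} {ρ : ℝ}
    (C : Finset E) (h : Ω ⊆ ⋃ c ∈ C, Metric.closedBall c ρ) : coveringNumber Ω ρ ≤ C.card :=
  Nat.sInf_le ⟨C, rfl, h⟩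

/-- covering number of the set of symmetric rank-`≤ r` matrices in the
Frobenius unit ball. -/
theorem covering_symm_lowrank_ball {n r : ℕ} (ρ : ℝ) (hρ₀ : 0 < ρ) (hρ₁ : ρ < 1) :
    (coveringNumber {X : Matrix (Fin n) (Fin n) ℝ | X = Xᵀ ∧ X.rank ≤ r ∧ ‖X‖ ≤ 1} ρ : ℝ)
      ≤ (r + 1) * (6 * Real.sqrt r / ρ) ^ (n * r) := by
  classical
  set Ω := {X : Matrix (Fin n) (Fin n) ℝ | X = Xᵀ ∧ X.rank ≤ r ∧ ‖X‖ ≤ 1} with hΩ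
  rcases Nat.eq_zero_or_pos r with hr | hr
  · subst hr
    have hcov : Ω ⊆ ⋃ c ∈ ({(0 : Matrix (Fin n) (Fin n) ℝ)} : Finset _), Metric.closedBall c ρ := by
      intro X hXmem
      obtain ⟨h1, h2, h3⟩ := hXmem
      obtain ⟨k, W, -, -, hW⟩ := decomp h1 h2 h3
      have hX0 : X = 0 := by
        rw [hW]
        ext a b
        simp [Matrix.mul_apply]
      simp [hX0, Metric.mem_closedBall, hρ₀.le]
    have h := coveringNumber_le_of_cover _ hcov
    simp only [Finset.card_singleton] at h
    rw [Nat.mul_zero, pow_zero, mul_one]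
    calc (coveringNumber Ω ρ : ℝ) ≤ 1 := by exact_mod_cast h
      _ ≤ ((0:ℕ):ℝ) + 1 := by norm_num
  · -- main case
    have hr1 : (1:ℝ) ≤ Real.sqrt r := by
      rw [show (1:ℝ) = Real.sqrt 1 by simp]
      exact Real.sqrt_le_sqrt (by exact_mod_cast hr)
    set R : ℝ := Real.sqrt (Real.sqrt r) with hR
    have hR1 : (1:ℝ) ≤ R := by
      rw [hR, show (1:ℝ) = Real.sqrt 1 by simp]
      exact Real.sqrt_le_sqrt hr1
    have hR0 : 0 < R := lt_of_lt_of_le one_pos hR1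
    have hRsq : R ^ 2 = Real.sqrt r := Real.sq_sqrt (Real.sqrt_nonneg _)
    set ε : ℝ := ρ / (2 * R) with hε'
    have hε : 0 < ε := by positivity
    obtain ⟨C₀, hC₀sub, hC₀card, hC₀cov⟩ :=
      exists_net (E := Matrix (Fin n) (Fin r) ℝ) (R := R) (ε := ε) hR0.le hε
    rw [Module.finrank_matrix, Module.finrank_self, mul_one, Fintype.card_fin,
      Fintype.card_fin] at hC₀card
    set Cen : Finset (Matrix (Fin n) (Fin n) ℝ) :=
      Finset.image (fun kU : Fin (r+1) × Matrix (Fin n) (Fin r) ℝ =>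
        kU.2 * Matrix.diagonal (fun j : Fin r => if (j:ℕ) < (kU.1:ℕ) then (1:ℝ) else -1) * kU.2ᵀ)
        (Finset.univ ×ˢ C₀) with hCen
    have hd : ∀ (k : ℕ) (j : Fin r), |(if (j:ℕ) < k then (1:ℝ) else -1)| = 1 := by
      intro k j; split_ifs <;> simp
    have hcov : Ω ⊆ ⋃ c ∈ Cen, Metric.closedBall c ρ := by
      intro X hXmem
      obtain ⟨h1, h2, h3⟩ := hXmem
      obtain ⟨k, W, hk, hWnorm, hW⟩ := decomp h1 h2 h3
      have hWball : W ∈ Metric.closedBall (0 : Matrix (Fin n) (Fin r) ℝ) R := by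
        rw [Metric.mem_closedBall, dist_zero_right]
        exact hWnorm
      obtain ⟨u, hu, hWu⟩ : ∃ u ∈ C₀, W ∈ Metric.closedBall u ε := by
        have := hC₀cov hWball
        simpa only [Set.mem_iUnion, exists_prop] using this
      have hunorm : ‖u‖ ≤ R := by
        have := hC₀sub hu
        rwa [Metric.mem_closedBall, dist_zero_right] at this
      set c := u * Matrix.diagonal (fun j : Fin r => if (j:ℕ) < k then (1:ℝ) else -1) * uᵀ with hc
      have hcmem : c ∈ Cen := by
        rw [hCen]
        apply Finset.mem_image.mpr
        exact ⟨(⟨k, by omega⟩, u), Finset.mem_product.mpr ⟨Finset.mem_univ _, hu⟩, rfl⟩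
      have hdist : dist X c ≤ ρ := by
        rw [dist_eq_norm, hW, hc]
        calc ‖W * Matrix.diagonal _ * Wᵀ - u * Matrix.diagonal _ * uᵀ‖
            ≤ (‖W‖ + ‖u‖) * ‖W - u‖ := lip W u _ (hd k)
          _ ≤ (R + R) * ε := by
              apply mul_le_mul (add_le_add hWnorm hunorm) ?_ (norm_nonneg _) (by positivity)
              rw [← dist_eq_norm]
              exact Metric.mem_closedBall.mp hWu
          _ = ρ := by rw [hε']; field_simp; ring
      exact Set.mem_biUnion hcmem (Metric.mem_closedBall.mpr (dist_comm X c ▸ hdist))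
    have hcount : coveringNumber Ω ρ ≤ (r + 1) * C₀.card := by
      calc coveringNumber Ω ρ ≤ Cen.card := coveringNumber_le_of_cover _ hcov
        _ ≤ ((Finset.univ : Finset (Fin (r+1))) ×ˢ C₀).card := Finset.card_image_le
        _ = (r + 1) * C₀.card := by
            rw [Finset.card_product, Finset.card_univ, Fintype.card_fin]
    -- base inequality
    have hbase : 1 + 2 * R / ε ≤ 6 * Real.sqrt r / ρ := by
      have h1 : 2 * R / ε = 4 * Real.sqrt r / ρ := by
        rw [hε', ← hRsq]
        field_simp
        ring
      rw [h1]
      have h2 : (1:ℝ) ≤ 2 * Real.sqrt r / ρ := by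
        rw [le_div_iff₀ hρ₀]
        nlinarith
      have : 6 * Real.sqrt r / ρ = 2 * Real.sqrt r / ρ + 4 * Real.sqrt r / ρ := by ring
      rw [this]
      linarith
    calc (coveringNumber Ω ρ : ℝ) ≤ ((r + 1) * C₀.card : ℕ) := by exact_mod_cast hcount
      _ = (r + 1 : ℝ) * (C₀.card : ℝ) := by push_cast; ring
      _ ≤ (r + 1 : ℝ) * (1 + 2 * R / ε) ^ (n * r) := by
          apply mul_le_mul_of_nonneg_left hC₀card (by positivity)
      _ ≤ (r + 1 : ℝ) * (6 * Real.sqrt r / ρ) ^ (n * r) := by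
          apply mul_le_mul_of_nonneg_left (pow_le_pow_left₀ (by positivity) hbase _) (by positivity)
end

section
/- Let A ∈ ℝ^{n₁×n₂} be a random matrix uniformly distributed on the Frobenius ball of radius R centered at the origin. If X ∈ ℝ^{n₁×n₂} satisfies ‖X‖_F ≥ ε > 0, then for every δ > 0, P[|⟨A, X⟩| ≤ δ] ≤ 2δ·V_{n₁n₂−1} / (εR·V_{n₁n₂}), where V_d is the volume of the unit ball in ℝ^d. -/
open Matrix

open MeasureTheory

attribute [local instance] Matrix.frobeniusNormedAddCommGroup

/-- `V_d`: the volume of the unit Euclidean ball in `ℝ^d`. -/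
noncomputable def unitBallVol (d : ℕ) : ℝ :=
  (volume (Metric.ball (0 : EuclideanSpace ℝ (Fin d)) 1)).toReal

open scoped RealInnerProductSpace

lemma unitBallVol_ofReal (d : ℕ) :
    ENNReal.ofReal (unitBallVol d) = volume (Metric.ball (0 : EuclideanSpace ℝ (Fin d)) 1) :=
  ENNReal.ofReal_toReal measure_ball_lt_top.ne

lemma unitBallVol_pos (d : ℕ) : 0 < unitBallVol d :=
  ENNReal.toReal_pos (Metric.measure_ball_pos _ _ one_pos).ne' measure_ball_lt_top.ne

lemma volume_closedBall_euclidean (d : ℕ) {R : ℝ} (hR : 0 ≤ R) :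
    volume (Metric.closedBall (0 : EuclideanSpace ℝ (Fin d)) R)
      = ENNReal.ofReal (R ^ d * unitBallVol d) := by
  rw [Measure.addHaar_closedBall _ _ hR, ENNReal.ofReal_mul (pow_nonneg hR d),
    unitBallVol_ofReal, finrank_euclideanSpace, Fintype.card_fin]

lemma norm_sq_eq_sum' {k : ℕ} (b : EuclideanSpace ℝ (Fin k)) :
    ‖b‖ ^ 2 = ∑ m, (b m) ^ 2 := by
  rw [EuclideanSpace.norm_eq, Real.sq_sqrt (Finset.sum_nonneg fun _ _ => by positivity)]
  simp [Real.norm_eq_abs, sq_abs]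

/-- Volume of the intersection of a ball of radius `R` with the slab
`{a | |⟪a, x⟫| ≤ δ}`, where `‖x‖ ≥ ε`. -/
lemma slab_ball_volume {d : ℕ} (hd : d ≠ 0) {R ε δ : ℝ} (hR : 0 < R) (hε : 0 < ε) (hδ : 0 < δ)
    (x : EuclideanSpace ℝ (Fin d)) (hx : ε ≤ ‖x‖) :
    volume {a : EuclideanSpace ℝ (Fin d) | ‖a‖ ≤ R ∧ |⟪a, x⟫| ≤ δ}
      ≤ ENNReal.ofReal (2 * δ / ε) * ENNReal.ofReal (R ^ (d - 1) * unitBallVol (d - 1)) := by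
  obtain ⟨k, rfl⟩ := Nat.exists_eq_succ_of_ne_zero hd
  have hx0 : 0 < ‖x‖ := lt_of_lt_of_le hε hx
  have hxne : x ≠ 0 := fun h => by simp [h] at hx0
  set u : EuclideanSpace ℝ (Fin (k + 1)) := ‖x‖⁻¹ • x with hu_def
  have hu : ‖u‖ = 1 := norm_smul_inv_norm hxne
  set e₀ : EuclideanSpace ℝ (Fin (k + 1)) := EuclideanSpace.single 0 1 with he₀_def
  have he₀ : ‖e₀‖ = 1 := by simp [he₀_def, EuclideanSpace.norm_single]
  set f := Submodule.reflection (ℝ ∙ (u - e₀))ᗮ with hf_def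
  have hfu : f u = e₀ := Submodule.reflection_sub (by rw [hu, he₀])
  set S₂ : Set (EuclideanSpace ℝ (Fin (k + 1))) := {b | ‖b‖ ≤ R ∧ ‖x‖ * |b 0| ≤ δ} with hS₂
  have hset : {a : EuclideanSpace ℝ (Fin (k + 1)) | ‖a‖ ≤ R ∧ |⟪a, x⟫| ≤ δ} = f ⁻¹' S₂ := by
    ext a
    simp only [hS₂, Set.mem_setOf_eq, Set.mem_preimage, f.norm_map]
    refine and_congr Iff.rfl ?_
    have h1 : ⟪e₀, f a⟫ = (f a) 0 := by
      simp [he₀_def, EuclideanSpace.inner_single_left]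
    have h2 : ⟪e₀, f a⟫ = ⟪u, a⟫ := by rw [← hfu, f.inner_map_map]
    have key : ‖x‖ * |(f a) 0| = |⟪a, x⟫| := by
      rw [← h1, h2, hu_def, real_inner_smul_left, abs_mul, abs_inv, abs_norm, ← mul_assoc,
        mul_inv_cancel₀ hx0.ne', one_mul, real_inner_comm]
    rw [key]
  have hS₂meas : MeasurableSet S₂ := by
    apply MeasurableSet.inter
    · exact measurableSet_le measurable_norm measurable_const
    · exact measurableSet_le (measurable_const.mul (((measurable_pi_apply 0).comp (PiLp.volume_preserving_ofLp (Fin (k + 1))).measurable).abs)) measurable_const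
  rw [hset, f.measurePreserving.measure_preimage hS₂meas.nullMeasurableSet]
  -- now bound the volume of `S₂`
  set Z : Set (Fin k → ℝ) := {z | ∑ i, (z i) ^ 2 ≤ R ^ 2} with hZ
  have hZmeas : MeasurableSet Z := by
    apply measurableSet_le _ measurable_const
    exact Finset.measurable_sum _ fun i _ => (measurable_pi_apply i).pow_const 2
  set W : Set (ℝ × (Fin k → ℝ)) := Set.Icc (-(δ / ε)) (δ / ε) ×ˢ Z with hW
  have hWmeas : MeasurableSet W := measurableSet_Icc.prod hZmeas
  set g : EuclideanSpace ℝ (Fin (k + 1)) → ℝ × (Fin k → ℝ) :=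
    (MeasurableEquiv.piFinSuccAbove (fun _ : Fin (k + 1) => ℝ) 0) ∘
      (MeasurableEquiv.toLp 2 (Fin (k + 1) → ℝ)).symm with hg_def
  have hg : MeasurePreserving g :=
    (volume_preserving_piFinSuccAbove (fun _ : Fin (k + 1) => ℝ) 0).comp
      (EuclideanSpace.volume_preserving_symm_measurableEquiv_toLp _)
  have hsub : S₂ ⊆ g ⁻¹' W := by
    rintro b ⟨hb1, hb2⟩
    have hgb1 : (g b).1 = b 0 := rfl
    have hgb2 : ∀ i, (g b).2 i = b ((0 : Fin (k + 1)).succAbove i) := fun i => rfl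
    constructor
    · rw [Set.mem_Icc, hgb1, ← abs_le, le_div_iff₀ hε]
      calc |b 0| * ε ≤ ‖x‖ * |b 0| := by nlinarith [abs_nonneg (b 0)]
        _ ≤ δ := hb2
    · show (g b).2 ∈ Z
      rw [hZ, Set.mem_setOf_eq]
      have hsum : ∑ m, (b m) ^ 2 ≤ R ^ 2 := by
        rw [← norm_sq_eq_sum']
        exact pow_le_pow_left₀ (norm_nonneg _) hb1 2
      calc ∑ i, ((g b).2 i) ^ 2 = ∑ i, (b (Fin.succ i)) ^ 2 := by
            refine Finset.sum_congr rfl fun i _ => ?_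
            rw [hgb2 i, Fin.succAbove_zero]
        _ ≤ (b 0) ^ 2 + ∑ i, (b (Fin.succ i)) ^ 2 := by nlinarith [sq_nonneg (b 0)]
        _ = ∑ m, (b m) ^ 2 := (Fin.sum_univ_succ (fun m => (b m : ℝ) ^ 2)).symm
        _ ≤ R ^ 2 := hsum
  calc volume S₂ ≤ volume (g ⁻¹' W) := measure_mono hsub
    _ = volume W := hg.measure_preimage hWmeas.nullMeasurableSet
    _ = volume (Set.Icc (-(δ / ε)) (δ / ε)) * volume Z := by
        rw [hW, Measure.volume_eq_prod, Measure.prod_prod]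
    _ = ENNReal.ofReal (2 * δ / ε) * volume Z := by
        rw [Real.volume_Icc]; congr 1; ring_nf
    _ ≤ ENNReal.ofReal (2 * δ / ε) * ENNReal.ofReal (R ^ k * unitBallVol k) := by
        apply mul_le_mul_right
        have hpre : (MeasurableEquiv.toLp 2 (Fin k → ℝ)).symm ⁻¹' Z
            = Metric.closedBall (0 : EuclideanSpace ℝ (Fin k)) R := by
          ext w
          simp only [Set.mem_preimage, hZ, Set.mem_setOf_eq, Metric.mem_closedBall,
            dist_zero_right]
          have hw : (MeasurableEquiv.toLp 2 (Fin k → ℝ)).symm w = fun i => w i := rfl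
          rw [hw]
          constructor
          · intro h
            have : ‖w‖ ^ 2 ≤ R ^ 2 := by rw [norm_sq_eq_sum']; exact h
            nlinarith [norm_nonneg w]
          · intro h
            rw [← norm_sq_eq_sum']
            exact pow_le_pow_left₀ (norm_nonneg _) h 2
        rw [← (EuclideanSpace.volume_preserving_symm_measurableEquiv_toLp (Fin k)).measure_preimage
          hZmeas.nullMeasurableSet, hpre, volume_closedBall_euclidean k hR.le]

/-- uncurry + reindex map from matrices (as functions) to `Fin (n₁ * n₂) → ℝ`. -/
def matFlatten {n₁ n₂ : ℕ} (A : Fin n₁ → Fin n₂ → ℝ) : Fin (n₁ * n₂) → ℝ :=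
  fun m => A (finProdFinEquiv.symm m).1 (finProdFinEquiv.symm m).2

lemma matFlatten_sum {n₁ n₂ : ℕ} (G : Fin n₁ → Fin n₂ → ℝ) :
    ∑ m, G (finProdFinEquiv.symm m).1 (finProdFinEquiv.symm m).2 = ∑ i, ∑ j, G i j := by
  calc ∑ m, G (finProdFinEquiv.symm m).1 (finProdFinEquiv.symm m).2
      = ∑ p : Fin n₁ × Fin n₂, G p.1 p.2 :=
        Equiv.sum_comp finProdFinEquiv.symm (fun p => G p.1 p.2)
    _ = ∑ i, ∑ j, G i j := Fintype.sum_prod_type _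

lemma measurable_matFlatten {n₁ n₂ : ℕ} : Measurable (matFlatten (n₁ := n₁) (n₂ := n₂)) :=
  measurable_pi_iff.mpr fun _ => (measurable_pi_apply _).comp (measurable_pi_apply _)

lemma measurePreserving_matFlatten {n₁ n₂ : ℕ} :
    MeasurePreserving (matFlatten (n₁ := n₁) (n₂ := n₂)) volume volume := by
  refine ⟨measurable_matFlatten, ?_⟩
  refine (Measure.pi_eq fun s hs => ?_).symm
  rw [Measure.map_apply measurable_matFlatten (MeasurableSet.univ_pi hs)]
  have hpre : matFlatten ⁻¹' (Set.univ.pi s)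
      = Set.univ.pi fun i => Set.univ.pi fun j => s (finProdFinEquiv (i, j)) := by
    ext A
    simp only [Set.mem_preimage, Set.mem_univ_pi, matFlatten, Set.mem_pi, Set.mem_univ,
      forall_true_left]
    constructor
    · intro h i j
      have := h (finProdFinEquiv (i, j))
      rwa [Equiv.symm_apply_apply] at this
    · intro h m
      have := h (finProdFinEquiv.symm m).1 (finProdFinEquiv.symm m).2
      rwa [Prod.mk.eta, Equiv.apply_symm_apply] at this
  rw [hpre, volume_pi_pi]
  simp_rw [volume_pi_pi]
  rw [← Fintype.prod_prod_type (fun p : Fin n₁ × Fin n₂ => volume (s (finProdFinEquiv p)))]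
  exact Equiv.prod_comp finProdFinEquiv (fun m => volume (s m))

/-- Matrices (as functions) mapped into Euclidean space. -/
noncomputable def matEuclid {n₁ n₂ : ℕ} (A : Fin n₁ → Fin n₂ → ℝ) :
    EuclideanSpace ℝ (Fin (n₁ * n₂)) :=
  (WithLp.equiv 2 (Fin (n₁ * n₂) → ℝ)).symm (matFlatten A)

lemma measurePreserving_matEuclid {n₁ n₂ : ℕ} :
    MeasurePreserving (matEuclid (n₁ := n₁) (n₂ := n₂)) volume volume := by
  unfold matEuclid
  exact (PiLp.volume_preserving_toLp (Fin (n₁ * n₂))).comp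
    measurePreserving_matFlatten

lemma matEuclid_apply {n₁ n₂ : ℕ} (A : Fin n₁ → Fin n₂ → ℝ) (m : Fin (n₁ * n₂)) :
    matEuclid A m = A (finProdFinEquiv.symm m).1 (finProdFinEquiv.symm m).2 := rfl

lemma norm_matEuclid {n₁ n₂ : ℕ} (A : Fin n₁ → Fin n₂ → ℝ) :
    ‖Matrix.of A‖ = ‖matEuclid A‖ := by
  rw [Matrix.frobenius_norm_def, EuclideanSpace.norm_eq, Real.sqrt_eq_rpow]
  congr 1
  simp_rw [Real.rpow_two, Real.norm_eq_abs, sq_abs, matEuclid_apply, Matrix.of_apply]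
  exact (matFlatten_sum (fun i j => (A i j) ^ 2)).symm

lemma inner_matEuclid {n₁ n₂ : ℕ} (A : Fin n₁ → Fin n₂ → ℝ) (X : Matrix (Fin n₁) (Fin n₂) ℝ) :
    Matrix.trace ((Matrix.of A)ᵀ * X) = ⟪matEuclid A, matEuclid X⟫ := by
  have h1 : (⟪matEuclid A, matEuclid X⟫ : ℝ)
      = ∑ m, A (finProdFinEquiv.symm m).1 (finProdFinEquiv.symm m).2
          * X (finProdFinEquiv.symm m).1 (finProdFinEquiv.symm m).2 := by
    simp [PiLp.inner_apply, RCLike.inner_apply, matEuclid_apply]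
    exact Finset.sum_congr rfl fun m _ => mul_comm _ _
  rw [h1, matFlatten_sum (fun i j => A i j * X i j)]
  simp only [Matrix.trace, Matrix.diag, Matrix.mul_apply, Matrix.transpose_apply,
    Matrix.of_apply]
  rw [Finset.sum_comm]

/-- concentration bound for `A` uniform on the Frobenius ball of radius `R`. -/
theorem uniform_matrix_concentration {n₁ n₂ : ℕ} (R ε δ : ℝ)
    (hR : 0 < R) (hε : 0 < ε) (hδ : 0 < δ)
    (X : Matrix (Fin n₁) (Fin n₂) ℝ) (hX : ε ≤ ‖X‖) :
    ((volume {A : Fin n₁ → Fin n₂ → ℝ | ‖Matrix.of A‖ ≤ R})⁻¹ •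
        volume.restrict {A : Fin n₁ → Fin n₂ → ℝ | ‖Matrix.of A‖ ≤ R})
      {A : Fin n₁ → Fin n₂ → ℝ | |Matrix.trace ((Matrix.of A)ᵀ * X)| ≤ δ}
      ≤ ENNReal.ofReal
          (2 * δ * unitBallVol (n₁ * n₂ - 1) / (ε * R * unitBallVol (n₁ * n₂))) := by
  have hd0 : n₁ * n₂ ≠ 0 := by
    intro h
    have hX0 : X = 0 := by
      rcases Nat.mul_eq_zero.mp h with h1 | h1
      · subst h1; ext i j; exact i.elim0
      · subst h1; ext i j; exact j.elim0
    rw [hX0, norm_zero] at hX; linarith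
  set x : EuclideanSpace ℝ (Fin (n₁ * n₂)) := matEuclid (Matrix.of.symm X) with hx_def
  have hxnorm : ‖X‖ = ‖x‖ := norm_matEuclid (Matrix.of.symm X)
  have hx : ε ≤ ‖x‖ := hxnorm ▸ hX
  set T' := Metric.closedBall (0 : EuclideanSpace ℝ (Fin (n₁ * n₂))) R with hT'
  set S' := {a : EuclideanSpace ℝ (Fin (n₁ * n₂)) | |⟪a, x⟫| ≤ δ} with hS'
  have hT'meas : MeasurableSet T' := measurableSet_closedBall
  have hS'meas : MeasurableSet S' := by
    apply measurableSet_le _ measurable_const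
    exact ((Continuous.inner continuous_id continuous_const).abs).measurable
  have hTset : {A : Fin n₁ → Fin n₂ → ℝ | ‖Matrix.of A‖ ≤ R} = matEuclid ⁻¹' T' := by
    ext A
    simp only [Set.mem_setOf_eq, Set.mem_preimage, hT', Metric.mem_closedBall, dist_zero_right]
    rw [norm_matEuclid]
  have hSset : {A : Fin n₁ → Fin n₂ → ℝ | |Matrix.trace ((Matrix.of A)ᵀ * X)| ≤ δ}
      = matEuclid ⁻¹' S' := by
    ext A
    simp only [Set.mem_setOf_eq, Set.mem_preimage, hS']
    rw [inner_matEuclid A X]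
    exact Iff.rfl
  have hmeasS : MeasurableSet {A : Fin n₁ → Fin n₂ → ℝ | |Matrix.trace ((Matrix.of A)ᵀ * X)| ≤ δ} :=
    hSset ▸ (measurePreserving_matEuclid.measurable hS'meas)
  rw [Measure.smul_apply, Measure.restrict_apply hmeasS, smul_eq_mul]
  rw [hSset, hTset, ← Set.preimage_inter,
    measurePreserving_matEuclid.measure_preimage ((hS'meas.inter hT'meas).nullMeasurableSet),
    measurePreserving_matEuclid.measure_preimage hT'meas.nullMeasurableSet]
  have hT'vol : volume T' = ENNReal.ofReal (R ^ (n₁ * n₂) * unitBallVol (n₁ * n₂)) :=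
    volume_closedBall_euclidean _ hR.le
  have hkey : volume (S' ∩ T')
      ≤ ENNReal.ofReal (2 * δ / ε)
        * ENNReal.ofReal (R ^ (n₁ * n₂ - 1) * unitBallVol (n₁ * n₂ - 1)) := by
    have hST : S' ∩ T' = {a : EuclideanSpace ℝ (Fin (n₁ * n₂)) | ‖a‖ ≤ R ∧ |⟪a, x⟫| ≤ δ} := by
      ext a
      simp only [Set.mem_inter_iff, hS', hT', Set.mem_setOf_eq, Metric.mem_closedBall,
        dist_zero_right]
      tauto
    rw [hST]
    exact slab_ball_volume hd0 hR hε hδ x hx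
  have hVd : 0 < unitBallVol (n₁ * n₂) := unitBallVol_pos _
  have hVk : 0 < unitBallVol (n₁ * n₂ - 1) := unitBallVol_pos _
  have hpos1 : 0 < R ^ (n₁ * n₂) * unitBallVol (n₁ * n₂) := mul_pos (pow_pos hR _) hVd
  calc (volume T')⁻¹ * volume (S' ∩ T')
      ≤ (ENNReal.ofReal (R ^ (n₁ * n₂) * unitBallVol (n₁ * n₂)))⁻¹
        * (ENNReal.ofReal (2 * δ / ε)
          * ENNReal.ofReal (R ^ (n₁ * n₂ - 1) * unitBallVol (n₁ * n₂ - 1))) := by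
        rw [hT'vol]; exact mul_le_mul_right hkey _
    _ = ENNReal.ofReal (2 * δ * unitBallVol (n₁ * n₂ - 1) / (ε * R * unitBallVol (n₁ * n₂))) := by
        rw [← ENNReal.ofReal_inv_of_pos hpos1,
          ← ENNReal.ofReal_mul (by positivity),
          ← ENNReal.ofReal_mul (by positivity)]
        congr 1
        have hpow : R ^ (n₁ * n₂) = R ^ (n₁ * n₂ - 1) * R := by
          rw [← pow_succ]; congr 1; omega
        rw [hpow]
        field_simp
end

section
/- Let a ∈ ℝⁿ be a random vector uniformly distributed on the Euclidean ball of radius R. If X ∈ ℝ^{n×n} is symmetric with ‖X‖₂ ≥ ε > 0, then for every δ > 0, P[|aᵀ X a| ≤ δ] ≤ 2√(2δ) · V_{n−1} / (√ε · R · V_n). -/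
open Matrix

open MeasureTheory

/-- The spectral norm (largest singular value) of a matrix. -/
noncomputable def matSpectralNorm {n₁ n₂ : ℕ} (X : Matrix (Fin n₁) (Fin n₂) ℝ) : ℝ :=
  ‖LinearMap.toContinuousLinearMap (Matrix.toEuclideanLin X)‖

lemma aux_sqrt_sub_sqrt_le {x y : ℝ} (hy : 0 ≤ y) (hxy : y ≤ x) (z : ℝ) (hz : x - y ≤ z) :
    Real.sqrt x - Real.sqrt y ≤ Real.sqrt z := by
  have h1 : Real.sqrt x ≤ Real.sqrt (x - y) + Real.sqrt y := by
    have h : Real.sqrt x ≤ Real.sqrt ((Real.sqrt (x-y) + Real.sqrt y)^2) := by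
      apply Real.sqrt_le_sqrt
      have := Real.sq_sqrt (sub_nonneg.2 hxy)
      have := Real.sq_sqrt hy
      nlinarith [Real.sqrt_nonneg (x-y), Real.sqrt_nonneg y,
        mul_nonneg (Real.sqrt_nonneg (x-y)) (Real.sqrt_nonneg y)]
    rwa [Real.sqrt_sq (by positivity)] at h
  have h2 : Real.sqrt (x - y) ≤ Real.sqrt z := Real.sqrt_le_sqrt hz
  linarith

lemma aux_slice_vol (c t : ℝ) :
    volume {u : ℝ | |u^2 + c| ≤ t} ≤ ENNReal.ofReal (2 * Real.sqrt (2*t)) := by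
  rcases le_or_gt t 0 with ht | ht
  · rcases eq_or_lt_of_le ht with ht0 | ht0
    · have hsub : {u : ℝ | |u^2 + c| ≤ t} ⊆ {Real.sqrt (-c), -Real.sqrt (-c)} := by
        intro u hu
        simp only [Set.mem_setOf_eq] at hu
        have h0 : |u^2 + c| ≤ 0 := by linarith [ht0.ge]
        have he : u^2 = -c := by have := abs_nonpos_iff.1 h0; linarith
        have hc : 0 ≤ -c := he ▸ sq_nonneg u
        have hs : (Real.sqrt (-c))^2 = -c := Real.sq_sqrt hc
        have : (u - Real.sqrt (-c)) * (u + Real.sqrt (-c)) = 0 := by nlinarith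
        rcases mul_eq_zero.1 this with h | h
        · left; linarith
        · right; simp only [Set.mem_singleton_iff]; linarith
      refine le_trans (measure_mono hsub) ?_
      rw [(Set.finite_singleton _).insert _ |>.measure_zero volume]
      exact zero_le
    · have : {u : ℝ | |u^2 + c| ≤ t} = ∅ := by
        ext u; simp only [Set.mem_setOf_eq, Set.mem_empty_iff_false, iff_false, not_le]
        exact lt_of_lt_of_le ht0 (abs_nonneg _)
      simp [this]
  · set b := t - c with hb
    set a' := max (-c - t) 0 with ha'
    have ha'0 : 0 ≤ a' := le_max_right _ _
    have ha'b : -c - t ≤ a' := le_max_left _ _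
    have hsub : {u : ℝ | |u^2 + c| ≤ t} ⊆
        Set.Icc (-(Real.sqrt b)) (-(Real.sqrt a')) ∪ Set.Icc (Real.sqrt a') (Real.sqrt b) := by
      intro u hu
      simp only [Set.mem_setOf_eq] at hu
      rw [abs_le] at hu
      have h1 : u^2 ≤ b := by simp only [hb]; linarith [hu.2]
      have h2 : a' ≤ u^2 := max_le (by linarith [hu.1]) (sq_nonneg u)
      have hub : |u| ≤ Real.sqrt b := by
        rw [← Real.sqrt_sq_eq_abs]; exact Real.sqrt_le_sqrt h1
      have hua : Real.sqrt a' ≤ |u| := by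
        rw [← Real.sqrt_sq_eq_abs]; exact Real.sqrt_le_sqrt h2
      rcases abs_cases u with ⟨he,_⟩|⟨he,_⟩
      · right; exact ⟨by rwa [he] at hua, by rwa [he] at hub⟩
      · left
        rw [he] at hua hub
        exact ⟨by linarith, by linarith⟩
    refine le_trans (measure_mono hsub) (le_trans (measure_union_le _ _) ?_)
    rw [Real.volume_Icc, Real.volume_Icc]
    have key : Real.sqrt b - Real.sqrt a' ≤ Real.sqrt (2*t) := by
      rcases le_or_gt b a' with h | h
      · have : Real.sqrt b ≤ Real.sqrt a' := Real.sqrt_le_sqrt h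
        linarith [Real.sqrt_nonneg (2*t)]
      · exact aux_sqrt_sub_sqrt_le ha'0 h.le _ (by linarith)
    have e1 : -Real.sqrt a' - -Real.sqrt b = Real.sqrt b - Real.sqrt a' := by ring
    rw [e1]
    have h2' : ENNReal.ofReal (Real.sqrt b - Real.sqrt a')
        ≤ ENNReal.ofReal (Real.sqrt (2*t)) := ENNReal.ofReal_le_ofReal key
    calc ENNReal.ofReal (Real.sqrt b - Real.sqrt a')
          + ENNReal.ofReal (Real.sqrt b - Real.sqrt a')
        ≤ ENNReal.ofReal (Real.sqrt (2*t)) + ENNReal.ofReal (Real.sqrt (2*t)) :=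
          add_le_add h2' h2'
      _ = ENNReal.ofReal (2 * Real.sqrt (2*t)) := by
          rw [← ENNReal.ofReal_add (Real.sqrt_nonneg _) (Real.sqrt_nonneg _)]
          congr 1
          ring

/-- concentration bound for the quadratic form `aᵀXa` with `a`
uniformly distributed on the Euclidean ball of radius `R`. -/
theorem uniform_quadratic_concentration {n : ℕ} (R ε δ : ℝ)
    (hR : 0 < R) (hε : 0 < ε) (hδ : 0 < δ)
    (X : Matrix (Fin n) (Fin n) ℝ) (hsymm : X = Xᵀ) (hX : ε ≤ matSpectralNorm X) :
    ((volume (Metric.closedBall (0 : EuclideanSpace ℝ (Fin n)) R))⁻¹ •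
        volume.restrict (Metric.closedBall (0 : EuclideanSpace ℝ (Fin n)) R))
      {a : EuclideanSpace ℝ (Fin n) | |∑ i, ∑ j, a i * X i j * a j| ≤ δ}
      ≤ ENNReal.ofReal
          (2 * Real.sqrt (2 * δ) * unitBallVol (n - 1) /
            (Real.sqrt ε * R * unitBallVol n)) := by
  classical
  rcases n with _ | m
  · exfalso
    have h0 : matSpectralNorm X ≤ 0 := by
      apply ContinuousLinearMap.opNorm_le_bound _ le_rfl
      intro x
      have hx : x = 0 := Subsingleton.elim x 0
      rw [hx, map_zero]
      simp
    linarith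
  -- Hermitian structure
  have hH : X.IsHermitian := by
    rw [Matrix.IsHermitian]
    ext i j
    rw [Matrix.conjTranspose_apply, star_trivial]
    exact congrFun (congrFun hsymm j) i
  set B := hH.eigenvectorBasis with hB
  set μ := hH.eigenvalues with hμ
  have hsymLM := Matrix.isHermitian_iff_isSymmetric.1 hH
  have hTB : ∀ i, Matrix.toEuclideanLin X (B i) = μ i • B i := by
    intro i
    have h := hH.mulVec_eigenvectorBasis i
    apply (WithLp.equiv 2 (Fin (m+1) → ℝ)).injective
    exact h
  have key1 : ∀ (a : EuclideanSpace ℝ (Fin (m+1))) i,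
      B.repr (Matrix.toEuclideanLin X a) i = μ i * B.repr a i := by
    intro a i
    rw [B.repr_apply_apply, B.repr_apply_apply, ← hsymLM (B i) a, hTB i,
      real_inner_smul_left]
  have key2 : ∀ (a : EuclideanSpace ℝ (Fin (m+1))),
      ∑ i, ∑ j, a i * X i j * a j = ∑ i, μ i * (B.repr a i)^2 := by
    intro a
    have h1 : ∑ i, ∑ j, a i * X i j * a j = @inner ℝ _ _ a (Matrix.toEuclideanLin X a) := by
      simp only [PiLp.inner_apply, RCLike.inner_apply, conj_trivial,
        Matrix.toEuclideanLin_apply]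
      congr 1
      ext i
      simp [Matrix.mulVec, dotProduct, Finset.mul_sum, mul_assoc, mul_comm, mul_left_comm]
    rw [h1, ← B.repr.inner_map_map a (Matrix.toEuclideanLin X a)]
    simp only [PiLp.inner_apply, RCLike.inner_apply, conj_trivial]
    refine Finset.sum_congr rfl fun i _ => ?_
    rw [key1 a i]; ring
  have key3 : ∀ (a : EuclideanSpace ℝ (Fin (m+1))),
      ∑ i, (B.repr a i)^2 = ‖a‖^2 := by
    intro a
    rw [← real_inner_self_eq_norm_sq, ← B.repr.inner_map_map a a]
    simp only [PiLp.inner_apply, RCLike.inner_apply, conj_trivial]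
    refine Finset.sum_congr rfl fun i _ => ?_
    ring
  -- a large eigenvalue
  obtain ⟨i₀, -, hmax⟩ := Finset.exists_max_image Finset.univ (fun i => |μ i|)
    ⟨0, Finset.mem_univ 0⟩
  have hi₀ : ε ≤ |μ i₀| := by
    refine le_trans hX ?_
    rw [matSpectralNorm]
    apply ContinuousLinearMap.opNorm_le_bound _ (abs_nonneg _)
    intro a
    rw [LinearMap.coe_toContinuousLinearMap']
    have h1 : ‖Matrix.toEuclideanLin X a‖^2 ≤ (|μ i₀| * ‖a‖)^2 := by
      rw [← key3 (Matrix.toEuclideanLin X a)]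
      calc ∑ i, (B.repr (Matrix.toEuclideanLin X a) i)^2
          = ∑ i, (μ i * B.repr a i)^2 := by
            refine Finset.sum_congr rfl fun i _ => ?_; rw [key1 a i]
        _ ≤ ∑ i, (μ i₀)^2 * (B.repr a i)^2 := by
            refine Finset.sum_le_sum fun i _ => ?_
            have h := hmax i (Finset.mem_univ i)
            have h2 : (μ i)^2 ≤ (μ i₀)^2 := by
              rw [← sq_abs (μ i), ← sq_abs (μ i₀)]
              exact pow_le_pow_left₀ (abs_nonneg _) h 2
            nlinarith [sq_nonneg (B.repr a i)]
        _ = (|μ i₀| * ‖a‖)^2 := by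
            rw [← Finset.mul_sum, key3 a]; rw [mul_pow, sq_abs]
    have h2 := Real.sqrt_le_sqrt h1
    rwa [Real.sqrt_sq (norm_nonneg _), Real.sqrt_sq (by positivity)] at h2
  have hμ0 : (0:ℝ) < |μ i₀| := lt_of_lt_of_le hε hi₀
  -- measure-theoretic setup
  set E := EuclideanSpace ℝ (Fin (m+1))
  set S : Set E := {a : E | |∑ i, ∑ j, a i * X i j * a j| ≤ δ} with hS
  have hSm : MeasurableSet S := by
    have hc : Continuous fun a : EuclideanSpace ℝ (Fin (m+1)) => |∑ i, ∑ j, a i * X i j * a j| := by fun_prop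
    exact hc.measurable measurableSet_Iic
  set F : E → ℝ × (Fin m → ℝ) :=
    (MeasurableEquiv.piFinSuccAbove (fun _ : Fin (m+1) => ℝ) i₀) ∘
      (MeasurableEquiv.toLp 2 (Fin (m+1) → ℝ)).symm ∘ ⇑B.repr with hF
  have hFmp : MeasurePreserving F volume volume :=
    ((volume_preserving_piFinSuccAbove (fun _ : Fin (m+1) => ℝ) i₀).comp
      (EuclideanSpace.volume_preserving_symm_measurableEquiv_toLp (Fin (m+1)))).comp
        B.measurePreserving_repr
  have hFa : ∀ a : E, (F a).1 = B.repr a i₀ ∧ ∀ j, (F a).2 j = B.repr a (i₀.succAbove j) := by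
    intro a
    exact ⟨rfl, fun j => rfl⟩
  set G : Set (ℝ × (Fin m → ℝ)) :=
    {p | |μ i₀ * p.1^2 + ∑ j, μ (i₀.succAbove j) * (p.2 j)^2| ≤ δ ∧ ∑ j, (p.2 j)^2 ≤ R^2}
    with hG
  have hGm : MeasurableSet G := by
    have h1 : Measurable fun p : ℝ × (Fin m → ℝ) =>
        |μ i₀ * p.1^2 + ∑ j, μ (i₀.succAbove j) * (p.2 j)^2| := by fun_prop
    have h2 : Measurable fun p : ℝ × (Fin m → ℝ) => ∑ j, (p.2 j)^2 := by fun_prop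
    exact (h1 measurableSet_Iic).inter (h2 measurableSet_Iic)
  have hsub : S ∩ Metric.closedBall (0 : E) R ⊆ F ⁻¹' G := by
    rintro a ⟨ha1, ha2⟩
    have hc1 : |∑ i, μ i * (B.repr a i)^2| ≤ δ := by rw [← key2]; exact ha1
    have hnorm : ∑ i, (B.repr a i)^2 ≤ R^2 := by
      rw [key3]
      have : ‖a‖ ≤ R := by rwa [Metric.mem_closedBall, dist_zero_right] at ha2
      exact pow_le_pow_left₀ (norm_nonneg _) this 2
    obtain ⟨h1, h2⟩ := hFa a
    constructor
    · rw [h1]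
      have hsum := Fin.sum_univ_succAbove (fun i => μ i * (B.repr a i)^2) i₀
      rw [hsum] at hc1
      convert hc1 using 4
      rw [h2]
    · have hsum := Fin.sum_univ_succAbove (fun i => (B.repr a i)^2) i₀
      rw [hsum] at hnorm
      have hsq : 0 ≤ (B.repr a i₀)^2 := sq_nonneg _
      calc ∑ j, ((F a).2 j)^2 = ∑ j, (B.repr a (i₀.succAbove j))^2 := by
            refine Finset.sum_congr rfl fun j _ => ?_; rw [h2]
        _ ≤ R^2 := by linarith
  -- bound the product measure of G
  have hGbound : (volume : Measure (ℝ × (Fin m → ℝ))) G ≤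
      ENNReal.ofReal (2 * Real.sqrt (2*δ/ε)) *
        ENNReal.ofReal (R^m) * volume (Metric.ball (0 : EuclideanSpace ℝ (Fin m)) 1) := by
    have hμne : μ i₀ ≠ 0 := fun h => by simp [h] at hμ0
    set W : Set (Fin m → ℝ) := {y | ∑ j, (y j)^2 ≤ R^2} with hW
    have hWm : MeasurableSet W := by
      have h2 : Measurable fun y : Fin m → ℝ => ∑ j, (y j)^2 := by fun_prop
      exact h2 measurableSet_Iic
    set L : ENNReal := ENNReal.ofReal (2 * Real.sqrt (2*δ/ε)) with hL
    have hslice : ∀ y : Fin m → ℝ,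
        volume ((fun x => (x, y)) ⁻¹' G) ≤ W.indicator (fun _ => L) y := by
      intro y
      by_cases hy : y ∈ W
      · rw [Set.indicator_of_mem hy]
        set g : ℝ := ∑ j, μ (i₀.succAbove j) * (y j)^2 with hg
        have hsub2 : ((fun x => (x, y)) ⁻¹' G) ⊆ {t : ℝ | |t^2 + g/μ i₀| ≤ δ/|μ i₀|} := by
          intro t ht
          rw [hG] at ht
          obtain ⟨h1, -⟩ := ht
          simp only [Set.mem_setOf_eq]
          have he : μ i₀ * t^2 + g = μ i₀ * (t^2 + g / μ i₀) := by field_simp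
          rw [he, abs_mul] at h1
          rw [le_div_iff₀ hμ0]
          linarith [h1]
        refine le_trans (measure_mono hsub2) (le_trans (aux_slice_vol _ _) ?_)
        rw [hL]
        apply ENNReal.ofReal_le_ofReal
        have hd : 2 * (δ/|μ i₀|) ≤ 2*δ/ε := by
          rw [← mul_div_assoc]
          gcongr
        have := Real.sqrt_le_sqrt hd
        nlinarith [Real.sqrt_nonneg (2*(δ/|μ i₀|))]
      · rw [Set.indicator_of_notMem hy]
        have hemp : ((fun x => (x, y)) ⁻¹' G) = ∅ := by
          ext t
          simp only [Set.mem_preimage, hG, Set.mem_setOf_eq, Set.mem_empty_iff_false, iff_false]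
          rintro ⟨-, h2⟩
          exact hy h2
        rw [hemp, measure_empty]
    have hprod : (volume : Measure (ℝ × (Fin m → ℝ))) G
        = ∫⁻ y, volume ((fun x => (x, y)) ⁻¹' G) := by
      rw [Measure.volume_eq_prod, Measure.prod_apply_symm hGm]
    rw [hprod]
    calc ∫⁻ y, volume ((fun x => (x, y)) ⁻¹' G)
        ≤ ∫⁻ y, W.indicator (fun _ => L) y := lintegral_mono hslice
      _ = L * volume W := by rw [lintegral_indicator hWm, setLIntegral_const]
      _ ≤ _ := by
          have hWvol : volume W = ENNReal.ofReal (R^m) *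
              volume (Metric.ball (0 : EuclideanSpace ℝ (Fin m)) 1) := by
            have hWeq : W = ⇑(MeasurableEquiv.toLp 2 (Fin m → ℝ)).symm.symm ⁻¹'
                Metric.closedBall (0 : EuclideanSpace ℝ (Fin m)) R := by
              ext y
              have hnorm : ‖(MeasurableEquiv.toLp 2 (Fin m → ℝ)).symm.symm y‖
                  = Real.sqrt (∑ j, (y j)^2) := by
                rw [EuclideanSpace.norm_eq]
                congr 1
                refine Finset.sum_congr rfl fun j _ => ?_
                rw [show ((MeasurableEquiv.toLp 2 (Fin m → ℝ)).symm.symm y) j = y j from rfl,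
                  Real.norm_eq_abs, sq_abs]
              simp only [Set.mem_preimage, Metric.mem_closedBall, dist_zero_right, hW,
                Set.mem_setOf_eq, hnorm]
              rw [Real.sqrt_le_iff]
              simp [hR.le]
            rw [hWeq,
              ((EuclideanSpace.volume_preserving_symm_measurableEquiv_toLp (Fin m)).symm).measure_preimage
                measurableSet_closedBall.nullMeasurableSet,
              Measure.addHaar_closedBall _ _ hR.le, finrank_euclideanSpace_fin]
          rw [hWvol, ← mul_assoc]
  -- put everything together
  rw [Measure.smul_apply, Measure.restrict_apply hSm, smul_eq_mul]
  have hvol : volume (S ∩ Metric.closedBall (0 : E) R) ≤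
      ENNReal.ofReal (2 * Real.sqrt (2*δ/ε)) *
        ENNReal.ofReal (R^m) * volume (Metric.ball (0 : EuclideanSpace ℝ (Fin m)) 1) := by
    refine le_trans (measure_mono hsub) ?_
    rw [hFmp.measure_preimage hGm.nullMeasurableSet]
    exact hGbound
  have hBall : volume (Metric.closedBall (0 : E) R)
      = ENNReal.ofReal (R^(m+1)) * volume (Metric.ball (0 : E) 1) := by
    rw [Measure.addHaar_closedBall _ _ hR.le, finrank_euclideanSpace_fin]
  have hvlt : volume (Metric.ball (0 : E) 1) ≠ ⊤ := measure_ball_lt_top.ne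
  have hwlt : volume (Metric.ball (0 : EuclideanSpace ℝ (Fin m)) 1) ≠ ⊤ :=
    measure_ball_lt_top.ne
  have hVn : 0 < unitBallVol (m+1) :=
    ENNReal.toReal_pos (Metric.measure_ball_pos volume (0 : E) one_pos).ne' hvlt
  have hVm : 0 ≤ unitBallVol m := ENNReal.toReal_nonneg
  have hveq : volume (Metric.ball (0 : E) 1) = ENNReal.ofReal (unitBallVol (m+1)) :=
    (ENNReal.ofReal_toReal hvlt).symm
  have hweq : volume (Metric.ball (0 : EuclideanSpace ℝ (Fin m)) 1)
      = ENNReal.ofReal (unitBallVol m) := (ENNReal.ofReal_toReal hwlt).symm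
  calc (volume (Metric.closedBall (0 : E) R))⁻¹ * volume (S ∩ Metric.closedBall (0 : E) R)
      ≤ (volume (Metric.closedBall (0 : E) R))⁻¹ *
          (ENNReal.ofReal (2 * Real.sqrt (2*δ/ε)) * ENNReal.ofReal (R^m) *
            volume (Metric.ball (0 : EuclideanSpace ℝ (Fin m)) 1)) :=
        mul_le_mul_right hvol _
    _ ≤ ENNReal.ofReal (2 * Real.sqrt (2 * δ) * unitBallVol (m + 1 - 1) /
            (Real.sqrt ε * R * unitBallVol (m+1))) := by
        rw [hBall, hveq, hweq, Nat.add_sub_cancel]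
        rw [← ENNReal.ofReal_mul (by positivity), ← ENNReal.ofReal_mul (by positivity),
          ← ENNReal.ofReal_mul (by positivity),
          ← ENNReal.ofReal_inv_of_pos (by positivity),
          ← ENNReal.ofReal_mul (by positivity)]
        apply ENNReal.ofReal_le_ofReal
        have hs : Real.sqrt (2*δ/ε) = Real.sqrt (2*δ) / Real.sqrt ε :=
          Real.sqrt_div (by positivity) ε
        have hsε : 0 < Real.sqrt ε := Real.sqrt_pos.2 hε
        rw [hs, pow_succ]
        apply le_of_eq
        field_simp
end

section
/- Let a ∈ ℝⁿ have i.i.d. Gaussian N(0,σ²) entries. If X ∈ ℝ^{n×n} is symmetric with ‖X‖₂ ≥ ε > 0, then for every δ > 0, P[|aᵀ X a| ≤ δ] ≤ 2√δ / (√(πε) σ). -/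
open Matrix

open MeasureTheory ProbabilityTheory Real
open scoped ENNReal NNReal RealInnerProductSpace

theorem lintegral_fin_prod {n : ℕ} (μ : Fin n → Measure ℝ) [∀ i, SigmaFinite (μ i)]
    (f : Fin n → ℝ → ℝ≥0∞) (hf : ∀ i, Measurable (f i)) :
    ∫⁻ x : Fin n → ℝ, ∏ i, f i (x i) ∂(Measure.pi μ) = ∏ i, ∫⁻ x, f i x ∂(μ i) := by
  induction n with
  | zero => simp [Measure.pi_of_empty μ]
  | succ m ih =>
    have hmp := measurePreserving_piFinSuccAbove μ 0
    have hg : Measurable fun z : ℝ × (Fin m → ℝ) =>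
        f 0 z.1 * ∏ j, f (Fin.succAbove 0 j) (z.2 j) := by
      apply ((hf 0).comp measurable_fst).mul
      exact (Finset.measurable_prod _ fun j _ =>
        (hf _).comp ((measurable_pi_apply j).comp measurable_snd))
    calc ∫⁻ x : Fin (m+1) → ℝ, ∏ i, f i (x i) ∂(Measure.pi μ)
        = ∫⁻ x : Fin (m+1) → ℝ,
            (fun z : ℝ × (Fin m → ℝ) => f 0 z.1 * ∏ j, f (Fin.succAbove 0 j) (z.2 j))
              (MeasurableEquiv.piFinSuccAbove (fun _ => ℝ) 0 x) ∂(Measure.pi μ) := by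
          refine lintegral_congr fun x => ?_
          rw [Fin.prod_univ_succAbove (fun i => f i (x i)) 0]
          simp [MeasurableEquiv.piFinSuccAbove_apply, Fin.removeNth, Fin.tail]
      _ = ∫⁻ z, f 0 z.1 * ∏ j, f (Fin.succAbove 0 j) (z.2 j)
            ∂((μ 0).prod (Measure.pi fun j => μ (Fin.succAbove 0 j))) := hmp.lintegral_comp hg
      _ = (∫⁻ x, f 0 x ∂(μ 0)) * ∏ j, ∫⁻ x, f (Fin.succAbove 0 j) x ∂(μ (Fin.succAbove 0 j)) := by
          have hgm : Measurable fun w : Fin m → ℝ => ∏ j, f (Fin.succAbove 0 j) (w j) :=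
            Finset.measurable_prod _ fun j _ => (hf _).comp (measurable_pi_apply j)
          rw [lintegral_prod_mul ((hf 0).aemeasurable) hgm.aemeasurable]
          rw [ih (fun j => μ (Fin.succAbove 0 j)) (fun j => f (Fin.succAbove 0 j))
            (fun j => hf _)]
      _ = ∏ i, ∫⁻ x, f i x ∂(μ i) :=
          (Fin.prod_univ_succAbove (fun i => ∫⁻ x, f i x ∂(μ i)) 0).symm


theorem pi_gaussian_eq {n : ℕ} (v : ℝ≥0) (hv : v ≠ 0) :
    (Measure.pi fun _ : Fin n => gaussianReal 0 v)
      = (volume : Measure (Fin n → ℝ)).withDensity fun a => ∏ i, gaussianPDF 0 v (a i) := by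
  refine Measure.pi_eq fun s hs => ?_
  have hbox : MeasurableSet (Set.univ.pi s) := MeasurableSet.univ_pi hs
  rw [withDensity_apply _ hbox]
  have hind : ∀ a : Fin n → ℝ, Set.indicator (Set.univ.pi s)
      (fun a => ∏ i, gaussianPDF 0 v (a i)) a
      = ∏ i, Set.indicator (s i) (gaussianPDF 0 v) (a i) := by
    intro a
    by_cases ha : a ∈ Set.univ.pi s
    · rw [Set.indicator_of_mem ha]
      exact Finset.prod_congr rfl fun i _ =>
        (Set.indicator_of_mem (ha i (Set.mem_univ i)) _).symm
    · rw [Set.indicator_of_notMem ha]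
      have : ∃ i, a i ∉ s i := by
        by_contra h
        push_neg at h
        exact ha fun i _ => h i
      obtain ⟨i, hi⟩ := this
      exact (Finset.prod_eq_zero (Finset.mem_univ i)
        (by rw [Set.indicator_of_notMem hi])).symm
  rw [← lintegral_indicator hbox, lintegral_congr hind, volume_pi,
    lintegral_fin_prod _ _ (fun i => (measurable_gaussianPDF 0 v).indicator (hs i))]
  refine Finset.prod_congr rfl fun i _ => ?_
  rw [lintegral_indicator (hs i), gaussianReal_of_var_ne_zero 0 hv,
    withDensity_apply _ (hs i)]

theorem prod_gaussianPDF {n : ℕ} (v : ℝ≥0) (a : Fin n → ℝ) :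
    ∏ i, gaussianPDF 0 v (a i)
      = ENNReal.ofReal ((Real.sqrt (2 * π * v))⁻¹ ^ n
          * Real.exp (-(∑ i, (a i) ^ 2) / (2 * v))) := by
  simp only [gaussianPDF]
  rw [← ENNReal.ofReal_prod_of_nonneg fun i _ => gaussianPDFReal_nonneg 0 v (a i)]
  congr 1
  simp only [gaussianPDFReal, sub_zero]
  rw [Finset.prod_mul_distrib, Finset.prod_const, Finset.card_univ, Fintype.card_fin,
    ← Real.exp_sum]
  congr 1
  rw [← Finset.sum_div, ← Finset.sum_neg_distrib]

theorem measurePreserving_withDensity {α : Type*} [MeasurableSpace α] (ν : Measure α)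
    (g : α → ℝ≥0∞) (hg : Measurable g) (φ : α ≃ᵐ α) (hφ : MeasurePreserving φ ν ν)
    (hcomp : ∀ x, g (φ x) = g x) :
    MeasurePreserving φ (ν.withDensity g) (ν.withDensity g) := by
  refine ⟨φ.measurable, ?_⟩
  ext s hs
  rw [Measure.map_apply φ.measurable hs, withDensity_apply _ (φ.measurable hs),
    withDensity_apply _ hs]
  calc ∫⁻ x in φ ⁻¹' s, g x ∂ν = ∫⁻ x in φ ⁻¹' s, g (φ x) ∂ν := by
        refine setLIntegral_congr_fun (φ.measurable hs) fun x _ => (hcomp x).symm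
    _ = ∫⁻ y in s, g y ∂(ν.map φ) := (setLIntegral_map hs hg φ.measurable).symm
    _ = ∫⁻ y in s, g y ∂ν := by rw [hφ.map_eq]

-- 1-D anti-concentration, positive leading coefficient case
theorem gauss1d_pos (σ ε δ l c : ℝ) (hσ : 0 < σ) (hε : 0 < ε) (hδ : 0 < δ)
    (hl : ε ≤ l) :
    gaussianReal 0 (Real.toNNReal (σ ^ 2)) {u : ℝ | |l * u ^ 2 + c| ≤ δ}
      ≤ ENNReal.ofReal (2 * Real.sqrt δ / (Real.sqrt (π * ε) * σ)) := by
  set v : ℝ≥0 := Real.toNNReal (σ ^ 2) with hv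
  have hv0 : v ≠ 0 := (Real.toNNReal_pos.mpr (by positivity)).ne'
  have hvr : (v : ℝ) = σ ^ 2 := Real.coe_toNNReal _ (sq_nonneg σ)
  have hl0 : 0 < l := lt_of_lt_of_le hε hl
  have hA : MeasurableSet {u : ℝ | |l * u ^ 2 + c| ≤ δ} := by
    have : Measurable fun u : ℝ => |l * u ^ 2 + c| := by measurability
    exact measurableSet_le this measurable_const
  -- density bound
  have hpdf : ∀ x : ℝ, gaussianPDF 0 v x ≤ ENNReal.ofReal ((Real.sqrt (2 * π * v))⁻¹) := by
    intro x
    refine ENNReal.ofReal_le_ofReal ?_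
    rw [gaussianPDFReal]
    calc (Real.sqrt (2 * π * v))⁻¹ * rexp (-(x - 0) ^ 2 / (2 * v))
        ≤ (Real.sqrt (2 * π * v))⁻¹ * 1 := by
          gcongr
          exact Real.exp_le_one_iff.mpr (by
            apply div_nonpos_of_nonpos_of_nonneg
            · simp [sq_nonneg]
            · positivity)
      _ = _ := mul_one _
  have step1 : gaussianReal 0 v {u : ℝ | |l * u ^ 2 + c| ≤ δ}
      ≤ ENNReal.ofReal ((Real.sqrt (2 * π * v))⁻¹) * volume {u : ℝ | |l * u ^ 2 + c| ≤ δ} := by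
    rw [gaussianReal_of_var_ne_zero 0 hv0, withDensity_apply _ hA]
    calc ∫⁻ x in {u : ℝ | |l * u ^ 2 + c| ≤ δ}, gaussianPDF 0 v x
        ≤ ∫⁻ _x in {u : ℝ | |l * u ^ 2 + c| ≤ δ}, ENNReal.ofReal ((Real.sqrt (2 * π * v))⁻¹) :=
          setLIntegral_mono measurable_const fun x _ => hpdf x
      _ = ENNReal.ofReal ((Real.sqrt (2 * π * v))⁻¹) * volume {u : ℝ | |l * u ^ 2 + c| ≤ δ} := by
          rw [setLIntegral_const, mul_comm]
  -- volume bound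
  have step2 : volume {u : ℝ | |l * u ^ 2 + c| ≤ δ} ≤ ENNReal.ofReal (2 * Real.sqrt (2 * δ / l)) := by
    set q : ℝ := (δ - c) / l with hq
    set p : ℝ := (-δ - c) / l with hp
    have hset : ∀ u : ℝ, |l * u ^ 2 + c| ≤ δ ↔ p ≤ u ^ 2 ∧ u ^ 2 ≤ q := by
      intro u
      rw [abs_le]
      constructor
      · rintro ⟨h1, h2⟩
        constructor
        · rw [hp, div_le_iff₀ hl0]; linarith
        · rw [hq, le_div_iff₀ hl0]; linarith
      · rintro ⟨h1, h2⟩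
        rw [hp, div_le_iff₀ hl0] at h1
        rw [hq, le_div_iff₀ hl0] at h2
        constructor <;> linarith
    rcases lt_or_ge q 0 with hq0 | hq0
    · have : {u : ℝ | |l * u ^ 2 + c| ≤ δ} = ∅ := by
        ext u
        simp only [Set.mem_setOf_eq, Set.mem_empty_iff_false, iff_false]
        rw [hset u]
        rintro ⟨-, h2⟩
        nlinarith [sq_nonneg u]
      simp [this]
    · set m : ℝ := max p 0 with hm
      have hpq : p ≤ q := by
        rw [hp, hq]
        exact (div_le_div_iff_of_pos_right hl0).mpr (by linarith)
      have hmq : m ≤ q := max_le hpq hq0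
      have hsub : {u : ℝ | |l * u ^ 2 + c| ≤ δ}
          ⊆ Set.Icc (-(Real.sqrt q)) (-(Real.sqrt m)) ∪ Set.Icc (Real.sqrt m) (Real.sqrt q) := by
        intro u hu
        rw [Set.mem_setOf_eq, hset u] at hu
        have h1 : Real.sqrt m ≤ |u| := by
          rw [← Real.sqrt_sq_eq_abs]
          exact Real.sqrt_le_sqrt (max_le hu.1 (sq_nonneg u))
        have h2 : |u| ≤ Real.sqrt q := by
          rw [← Real.sqrt_sq_eq_abs]
          exact Real.sqrt_le_sqrt hu.2
        rcases le_or_gt 0 u with hu0 | hu0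
        · right
          rw [abs_of_nonneg hu0] at h1 h2
          exact ⟨h1, h2⟩
        · left
          rw [abs_of_neg hu0] at h1 h2
          constructor <;> linarith
      have hkey : Real.sqrt q - Real.sqrt m ≤ Real.sqrt (2 * δ / l) := by
        have h1 : Real.sqrt q ≤ Real.sqrt m + Real.sqrt (q - m) := by
          have h2 : q ≤ (Real.sqrt m + Real.sqrt (q - m)) ^ 2 := by
            nlinarith [Real.sq_sqrt (le_max_right p 0 : (0:ℝ) ≤ m),
              Real.sq_sqrt (by linarith : (0:ℝ) ≤ q - m),
              Real.sqrt_nonneg m, Real.sqrt_nonneg (q - m),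
              mul_nonneg (Real.sqrt_nonneg m) (Real.sqrt_nonneg (q - m))]
          calc Real.sqrt q ≤ Real.sqrt ((Real.sqrt m + Real.sqrt (q - m)) ^ 2) :=
                Real.sqrt_le_sqrt h2
            _ = Real.sqrt m + Real.sqrt (q - m) :=
                Real.sqrt_sq (by positivity)
        have h3 : Real.sqrt (q - m) ≤ Real.sqrt (2 * δ / l) := by
          apply Real.sqrt_le_sqrt
          have : q - p = 2 * δ / l := by
            rw [hq, hp]
            field_simp
            ring
          have hpm : p ≤ m := le_max_left _ _
          linarith
        linarith
      calc volume {u : ℝ | |l * u ^ 2 + c| ≤ δ}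
          ≤ volume (Set.Icc (-(Real.sqrt q)) (-(Real.sqrt m)) ∪ Set.Icc (Real.sqrt m) (Real.sqrt q)) :=
            measure_mono hsub
        _ ≤ volume (Set.Icc (-(Real.sqrt q)) (-(Real.sqrt m))) + volume (Set.Icc (Real.sqrt m) (Real.sqrt q)) :=
            measure_union_le _ _
        _ = ENNReal.ofReal (Real.sqrt q - Real.sqrt m) + ENNReal.ofReal (Real.sqrt q - Real.sqrt m) := by
            rw [Real.volume_Icc, Real.volume_Icc]
            congr 1 <;> congr 1 <;> ring
        _ ≤ ENNReal.ofReal (Real.sqrt (2 * δ / l)) + ENNReal.ofReal (Real.sqrt (2 * δ / l)) := by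
            gcongr <;> exact hkey
        _ = ENNReal.ofReal (2 * Real.sqrt (2 * δ / l)) := by
            rw [← ENNReal.ofReal_add (Real.sqrt_nonneg _) (Real.sqrt_nonneg _)]
            congr 1
            ring
  -- combine and arithmetic
  calc gaussianReal 0 v {u : ℝ | |l * u ^ 2 + c| ≤ δ}
      ≤ ENNReal.ofReal ((Real.sqrt (2 * π * v))⁻¹) * ENNReal.ofReal (2 * Real.sqrt (2 * δ / l)) := by
        exact le_trans step1 (by gcongr)
    _ ≤ ENNReal.ofReal (2 * Real.sqrt δ / (Real.sqrt (π * ε) * σ)) := by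
        rw [← ENNReal.ofReal_mul (by positivity)]
        refine ENNReal.ofReal_le_ofReal ?_
        rw [hvr]
        have hπ : (0:ℝ) < π := Real.pi_pos
        have e1 : Real.sqrt (2 * π * σ ^ 2) = Real.sqrt 2 * Real.sqrt π * σ := by
          rw [Real.sqrt_mul (by positivity), Real.sqrt_mul (by norm_num), Real.sqrt_sq hσ.le]
        have e2 : Real.sqrt (2 * δ / l) = Real.sqrt 2 * Real.sqrt δ / Real.sqrt l := by
          rw [Real.sqrt_div (by positivity) l, Real.sqrt_mul (by norm_num)]
        have e3 : Real.sqrt (π * ε) = Real.sqrt π * Real.sqrt ε := Real.sqrt_mul hπ.le ε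
        have hsl : Real.sqrt ε ≤ Real.sqrt l := Real.sqrt_le_sqrt hl
        have hsε : 0 < Real.sqrt ε := Real.sqrt_pos.mpr hε
        have hsl0 : 0 < Real.sqrt l := lt_of_lt_of_le hsε hsl
        have hsπ : 0 < Real.sqrt π := Real.sqrt_pos.mpr hπ
        have hs2 : 0 < Real.sqrt 2 := by positivity
        rw [e1, e2, e3]
        rw [show (Real.sqrt 2 * Real.sqrt π * σ)⁻¹ * (2 * (Real.sqrt 2 * Real.sqrt δ / Real.sqrt l))
            = 2 * Real.sqrt δ / (Real.sqrt π * σ * Real.sqrt l) from by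
          field_simp]
        gcongr 2 * Real.sqrt δ / ?_
        nlinarith [mul_le_mul_of_nonneg_left hsl (by positivity : (0:ℝ) ≤ Real.sqrt π * σ)]


section Eigen
variable {n : ℕ} {X : Matrix (Fin n) (Fin n) ℝ} (hH : X.IsHermitian)

lemma eig_apply (k : Fin n) :
    Matrix.toEuclideanLin X (hH.eigenvectorBasis k) = hH.eigenvalues k • hH.eigenvectorBasis k := by
  rw [Matrix.toEuclideanLin_apply, hH.mulVec_eigenvectorBasis]
  simp

lemma toEuclideanLin_repr_symm (b : EuclideanSpace ℝ (Fin n)) :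
    Matrix.toEuclideanLin X (hH.eigenvectorBasis.repr.symm b)
      = hH.eigenvectorBasis.repr.symm (WithLp.toLp 2 (fun k => hH.eigenvalues k * b k)) := by
  rw [← OrthonormalBasis.sum_repr_symm, ← OrthonormalBasis.sum_repr_symm]
  rw [map_sum]
  refine Finset.sum_congr rfl fun k _ => ?_
  rw [_root_.map_smul, eig_apply hH k, smul_smul, mul_comm]

lemma qf_eigen (b : EuclideanSpace ℝ (Fin n)) :
    ⟪hH.eigenvectorBasis.repr.symm b,
      Matrix.toEuclideanLin X (hH.eigenvectorBasis.repr.symm b)⟫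
      = ∑ k, hH.eigenvalues k * (b k) ^ 2 := by
  rw [toEuclideanLin_repr_symm hH b, LinearIsometryEquiv.inner_map_map]
  simp only [PiLp.inner_apply, RCLike.inner_apply, conj_trivial]
  refine Finset.sum_congr rfl fun k _ => ?_
  show hH.eigenvalues k * b k * b k = _
  ring

lemma dot_eq_inner (y : EuclideanSpace ℝ (Fin n)) :
    ∑ i, ∑ j, y i * X i j * y j = ⟪y, Matrix.toEuclideanLin X y⟫ := by
  simp only [PiLp.inner_apply, RCLike.inner_apply, conj_trivial,
    Matrix.toEuclideanLin_apply]
  refine Finset.sum_congr rfl fun i _ => ?_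
  show ∑ j, y i * X i j * y j = (X *ᵥ y.ofLp) i * y i
  rw [Matrix.mulVec, dotProduct, Finset.sum_mul]
  refine Finset.sum_congr rfl fun j _ => ?_
  show y i * X i j * y j = X i j * y j * y i
  ring

lemma sum_sq_eq (x : EuclideanSpace ℝ (Fin n)) : ∑ i, (x i) ^ 2 = ‖x‖ ^ 2 := by
  rw [EuclideanSpace.norm_eq, Real.sq_sqrt (by positivity)]
  simp [sq_abs]

lemma spectralNorm_le {M : ℝ} (hM : 0 ≤ M) (hev : ∀ k, |hH.eigenvalues k| ≤ M) :
    matSpectralNorm X ≤ M := by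
  refine ContinuousLinearMap.opNorm_le_bound _ hM fun y => ?_
  set T := Matrix.toEuclideanLin X
  have hy : y = hH.eigenvectorBasis.repr.symm (hH.eigenvectorBasis.repr y) :=
    (LinearIsometryEquiv.symm_apply_apply _ _).symm
  set b : EuclideanSpace ℝ (Fin n) := hH.eigenvectorBasis.repr y with hb
  have h1 : LinearMap.toContinuousLinearMap T y = T y := rfl
  rw [h1]
  have h2 : T y = hH.eigenvectorBasis.repr.symm (WithLp.toLp 2 (fun k => hH.eigenvalues k * b k)) := by
    conv_lhs => rw [hy]
    exact toEuclideanLin_repr_symm hH b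
  rw [h2, LinearIsometryEquiv.norm_map]
  have h3 : ‖y‖ = ‖b‖ := by rw [hy, LinearIsometryEquiv.norm_map]
  rw [h3, EuclideanSpace.norm_eq, EuclideanSpace.norm_eq]
  simp only [Real.norm_eq_abs, sq_abs]
  show Real.sqrt (∑ k, (hH.eigenvalues k * b k) ^ 2) ≤ M * Real.sqrt (∑ k, (b k) ^ 2)
  calc Real.sqrt (∑ k, (hH.eigenvalues k * b k) ^ 2)
      ≤ Real.sqrt (M ^ 2 * ∑ k, (b k) ^ 2) := by
        apply Real.sqrt_le_sqrt
        rw [Finset.mul_sum]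
        refine Finset.sum_le_sum fun k _ => ?_
        rw [mul_pow]
        exact mul_le_mul_of_nonneg_right
          (by nlinarith [sq_abs (hH.eigenvalues k), hev k, abs_nonneg (hH.eigenvalues k)])
          (sq_nonneg _)
    _ = M * Real.sqrt (∑ k, (b k) ^ 2) := by
        rw [Real.sqrt_mul (by positivity), Real.sqrt_sq hM]

end Eigen

theorem gauss1d (σ ε δ l c : ℝ) (hσ : 0 < σ) (hε : 0 < ε) (hδ : 0 < δ) (hl : ε ≤ |l|) :
    gaussianReal 0 (Real.toNNReal (σ ^ 2)) {u : ℝ | |l * u ^ 2 + c| ≤ δ}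
      ≤ ENNReal.ofReal (2 * Real.sqrt δ / (Real.sqrt (π * ε) * σ)) := by
  rcases le_or_gt 0 l with h | h
  · rw [abs_of_nonneg h] at hl
    exact gauss1d_pos σ ε δ l c hσ hε hδ hl
  · rw [abs_of_neg h] at hl
    have hset : {u : ℝ | |l * u ^ 2 + c| ≤ δ} = {u : ℝ | |(-l) * u ^ 2 + (-c)| ≤ δ} := by
      ext u
      simp only [Set.mem_setOf_eq]
      rw [show (-l) * u ^ 2 + (-c) = -(l * u ^ 2 + c) by ring, abs_neg]
    rw [hset]
    exact gauss1d_pos σ ε δ (-l) (-c) hσ hε hδ hl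

/-- concentration bound for the quadratic form `aᵀXa` with `a` having
i.i.d. Gaussian `N(0,σ²)` entries. -/
theorem gaussian_quadratic_concentration {n : ℕ} (σ ε δ : ℝ)
    (hσ : 0 < σ) (hε : 0 < ε) (hδ : 0 < δ)
    (X : Matrix (Fin n) (Fin n) ℝ) (hsymm : X = Xᵀ) (hX : ε ≤ matSpectralNorm X) :
    (Measure.pi fun _ : Fin n => gaussianReal 0 (Real.toNNReal (σ ^ 2)))
      {a : Fin n → ℝ | |∑ i, ∑ j, a i * X i j * a j| ≤ δ}
      ≤ ENNReal.ofReal (2 * Real.sqrt δ / (Real.sqrt (π * ε) * σ)) := by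
  have hH : X.IsHermitian := by
    ext i j
    rw [Matrix.conjTranspose_apply, star_trivial]
    exact (congrFun (congrFun hsymm j) i).trans (Matrix.transpose_apply X j i)
  rcases n with _ | m
  · exfalso
    have h0 : matSpectralNorm X ≤ 0 := by
      refine ContinuousLinearMap.opNorm_le_bound _ le_rfl fun y => ?_
      have hy : y = 0 := by
        have := hH.eigenvectorBasis.repr.injective (a₁ := y) (a₂ := 0)
        apply this
        ext i
        exact i.elim0
      simp [hy]
    linarith
  set v : ℝ≥0 := Real.toNNReal (σ ^ 2) with hv
  have hv0 : v ≠ 0 := (Real.toNNReal_pos.mpr (by positivity)).ne'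
  set lam : Fin (m + 1) → ℝ := hH.eigenvalues with hlam
  set B := hH.eigenvectorBasis with hB
  obtain ⟨i₀, -, hmax⟩ := Finset.exists_max_image Finset.univ (fun k => |lam k|)
    ⟨0, Finset.mem_univ 0⟩
  have hi₀ : ε ≤ |lam i₀| :=
    le_trans hX (spectralNorm_le hH (abs_nonneg _) fun k => hmax k (Finset.mem_univ k))
  set μ := Measure.pi fun _ : Fin (m + 1) => gaussianReal 0 v with hμ
  set A := {a : Fin (m + 1) → ℝ | |∑ i, ∑ j, a i * X i j * a j| ≤ δ} with hA
  have hAmf : Measurable fun a : Fin (m + 1) → ℝ => |∑ i, ∑ j, a i * X i j * a j| := by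
    apply Measurable.abs
    apply Finset.measurable_sum
    intro i _
    apply Finset.measurable_sum
    intro j _
    exact ((measurable_pi_apply i).mul_const _).mul (measurable_pi_apply j)
  have hAm : MeasurableSet A := measurableSet_le hAmf measurable_const
  set S := {b : Fin (m + 1) → ℝ | |∑ k, lam k * (b k) ^ 2| ≤ δ} with hS
  -- rotation invariance
  set e := (MeasurableEquiv.toLp 2 (Fin (m + 1) → ℝ)).symm with he
  set Lm := B.repr.symm.toHomeomorph.toMeasurableEquiv with hLm
  set ψ := e.symm.trans (Lm.trans e) with hψ
  have mpvol : MeasurePreserving ψ (volume : Measure (Fin (m + 1) → ℝ)) volume := by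
    have h1 := EuclideanSpace.volume_preserving_symm_measurableEquiv_toLp (Fin (m + 1))
    have h2 := B.measurePreserving_repr_symm
    exact h1.comp (h2.comp h1.symm)
  set g : (Fin (m + 1) → ℝ) → ℝ≥0∞ := fun a => ∏ i, gaussianPDF 0 v (a i) with hg
  have hgmeas : Measurable g :=
    Finset.measurable_prod _ fun i _ => (measurable_gaussianPDF 0 v).comp (measurable_pi_apply i)
  have hcomp : ∀ b, g (ψ b) = g b := by
    intro b
    rw [hg]
    simp only
    rw [prod_gaussianPDF, prod_gaussianPDF]
    have hsum : ∑ i, (ψ b i) ^ 2 = ∑ i, (b i) ^ 2 := by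
      have h1 : ∑ i, (ψ b i) ^ 2 = ∑ i, ((B.repr.symm (e.symm b) : EuclideanSpace ℝ (Fin (m+1))) i) ^ 2 := rfl
      rw [h1, sum_sq_eq, LinearIsometryEquiv.norm_map, ← sum_sq_eq]
      exact Finset.sum_congr rfl fun i _ => rfl
    rw [hsum]
  have mpμ : MeasurePreserving ψ μ μ := by
    rw [hμ, pi_gaussian_eq v hv0]
    exact measurePreserving_withDensity _ g hgmeas ψ mpvol hcomp
  have hpre : ψ ⁻¹' A = S := by
    ext b
    simp only [Set.mem_preimage, hA, hS, Set.mem_setOf_eq]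
    have hqf : ∑ i, ∑ j, (ψ b) i * X i j * (ψ b) j = ∑ k, lam k * (b k) ^ 2 := by
      have h1 : ∑ i, ∑ j, (ψ b) i * X i j * (ψ b) j
          = ∑ i, ∑ j, (B.repr.symm (e.symm b) : EuclideanSpace ℝ (Fin (m+1))) i * X i j
              * (B.repr.symm (e.symm b) : EuclideanSpace ℝ (Fin (m+1))) j := rfl
      rw [h1, dot_eq_inner, qf_eigen hH]
      exact Finset.sum_congr rfl fun k _ => rfl
    rw [hqf]
  have key1 : μ A = μ S := by
    rw [← hpre]
    exact (mpμ.measure_preimage hAm.nullMeasurableSet).symm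
  -- split off coordinate i₀
  set γ := gaussianReal 0 v with hγ
  set ν := Measure.pi fun _ : Fin m => γ with hν
  have hmp2 := measurePreserving_piFinSuccAbove (fun _ : Fin (m + 1) => γ) i₀
  set T2 := {z : ℝ × (Fin m → ℝ) |
    |lam i₀ * z.1 ^ 2 + ∑ j, lam (i₀.succAbove j) * (z.2 j) ^ 2| ≤ δ} with hT2
  have hT2m : MeasurableSet T2 := by
    apply measurableSet_le _ measurable_const
    apply Measurable.abs
    apply Measurable.add
    · exact (measurable_fst.pow_const 2).const_mul _
    · apply Finset.measurable_sum
      intro j _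
      exact (((measurable_pi_apply j).comp measurable_snd).pow_const 2).const_mul _
  have hpre2 : (MeasurableEquiv.piFinSuccAbove (fun _ : Fin (m + 1) => ℝ) i₀) ⁻¹' T2 = S := by
    ext b
    simp only [Set.mem_preimage, hT2, hS, Set.mem_setOf_eq,
      MeasurableEquiv.piFinSuccAbove_apply]
    rw [Fin.sum_univ_succAbove (fun k => lam k * (b k) ^ 2) i₀]
    simp [Fin.removeNth]
  have key2 : μ S = (γ.prod ν) T2 := by
    rw [← hpre2]
    exact hmp2.measure_preimage hT2m.nullMeasurableSet
  have key3 : (γ.prod ν) T2 ≤ ENNReal.ofReal (2 * Real.sqrt δ / (Real.sqrt (π * ε) * σ)) := by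
    rw [Measure.prod_apply_symm hT2m]
    calc ∫⁻ w, γ ((fun u => (u, w)) ⁻¹' T2) ∂ν
        ≤ ∫⁻ _w, ENNReal.ofReal (2 * Real.sqrt δ / (Real.sqrt (π * ε) * σ)) ∂ν := by
          refine lintegral_mono fun w => ?_
          have hpre3 : ((fun u => (u, w)) ⁻¹' T2)
              = {u : ℝ | |lam i₀ * u ^ 2 + ∑ j, lam (i₀.succAbove j) * (w j) ^ 2| ≤ δ} := rfl
          rw [hpre3]
          exact gauss1d σ ε δ (lam i₀) _ hσ hε hδ hi₀
      _ = ENNReal.ofReal (2 * Real.sqrt δ / (Real.sqrt (π * ε) * σ)) := by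
          rw [lintegral_const, measure_univ, mul_one]
  calc μ A = μ S := key1
    _ = (γ.prod ν) T2 := key2
    _ ≤ _ := key3
end

section
/- Let u, v be independent standard Gaussian random variables and let t > 0. Then P[|uv| ≤ t] ≤ (1 − e^{−t}) + t·∫_t^∞ z^{−1} e^{−z} dz ≤ t(1 + ln(1 + 1/t)). -/
open MeasureTheory Set Real Filter ProbabilityTheory
open scoped ENNReal NNReal Topology

theorem my_lintegral_comp_polarCoord_symm (f : ℝ × ℝ → ℝ≥0∞) :
    (∫⁻ p in polarCoord.target, ENNReal.ofReal p.1 * f (polarCoord.symm p)) = ∫⁻ p, f p := by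
  set B : ℝ × ℝ → ℝ × ℝ →L[ℝ] ℝ × ℝ := fun p =>
    LinearMap.toContinuousLinearMap (Matrix.toLin (Module.Basis.finTwoProd ℝ) (Module.Basis.finTwoProd ℝ)
      !![Real.cos p.2, -p.1 * Real.sin p.2; Real.sin p.2, p.1 * Real.cos p.2])
  have A : ∀ p ∈ polarCoord.target, HasFDerivWithinAt polarCoord.symm (B p) polarCoord.target p :=
    fun p _ => (hasFDerivAt_polarCoord_symm p).hasFDerivWithinAt
  have B_det : ∀ p, (B p).det = p.1 := by
    intro p
    conv_rhs => rw [← one_mul p.1, ← cos_sq_add_sin_sq p.2]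
    simp only [B, neg_mul, LinearMap.det_toContinuousLinearMap, LinearMap.det_toLin,
      Matrix.det_fin_two_of, sub_neg_eq_add]
    ring
  symm
  calc
    ∫⁻ p, f p = ∫⁻ p in polarCoord.source, f p := by
      rw [← setLIntegral_univ]
      exact (setLIntegral_congr polarCoord_source_ae_eq_univ.symm)
    _ = ∫⁻ p in polarCoord.symm '' polarCoord.target, f p := by
      rw [polarCoord.symm_image_target_eq_source]
    _ = ∫⁻ p in polarCoord.target, ENNReal.ofReal |(B p).det| * f (polarCoord.symm p) :=
      lintegral_image_eq_lintegral_abs_det_fderiv_mul volume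
        polarCoord.open_target.measurableSet A polarCoord.symm.injOn f
    _ = ∫⁻ p in polarCoord.target, ENNReal.ofReal p.1 * f (polarCoord.symm p) := by
      refine setLIntegral_congr_fun polarCoord.open_target.measurableSet (fun p hp => ?_)
      rw [B_det, abs_of_pos hp.1]


theorem step1 (t : ℝ) :
    ((gaussianReal 0 1).prod (gaussianReal 0 1)) {p : ℝ × ℝ | |p.1 * p.2| ≤ t}
      = ∫⁻ p : ℝ × ℝ, gaussianPDF 0 1 p.1 * gaussianPDF 0 1 p.2 *
          {q : ℝ × ℝ | |q.1 * q.2| ≤ t}.indicator 1 p := by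
  set S : Set (ℝ × ℝ) := {q : ℝ × ℝ | |q.1 * q.2| ≤ t} with hSdef
  have hS : MeasurableSet S :=
    measurableSet_le ((measurable_fst.mul measurable_snd).abs) measurable_const
  set g : ℝ → ℝ≥0∞ := gaussianPDF 0 1 with hg
  have hgm : Measurable g := measurable_gaussianPDF 0 1
  have hglt : ∀ x, g x < ⊤ := fun x => ENNReal.ofReal_lt_top
  have hgne : ∀ x, g x ≠ ⊤ := fun x => (hglt x).ne
  rw [gaussianReal_of_var_ne_zero 0 one_ne_zero, Measure.prod_apply hS]
  have h1 : ∀ x, (volume.withDensity g) (Prod.mk x ⁻¹' S) = ∫⁻ y, g y * S.indicator 1 (x, y) := by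
    intro x
    rw [withDensity_apply _ (measurable_prodMk_left hS),
      ← lintegral_indicator (measurable_prodMk_left hS) _]
    congr 1; ext y
    by_cases h : (x, y) ∈ S
    · simp [Set.indicator_of_mem, h, Set.indicator_of_mem (show y ∈ Prod.mk x ⁻¹' S from h)]
    · simp [Set.indicator_of_notMem, h, Set.indicator_of_notMem (show y ∉ Prod.mk x ⁻¹' S from h)]
  rw [lintegral_congr h1,
    lintegral_withDensity_eq_lintegral_mul_non_measurable volume hgm (ae_of_all _ hglt)]
  have h2 : ∀ x, (g * fun x => ∫⁻ y, g y * S.indicator 1 (x, y)) x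
      = ∫⁻ y, g x * g y * S.indicator 1 (x, y) := by
    intro x
    simp only [Pi.mul_apply]
    rw [← lintegral_const_mul' _ _ (hgne x)]
    congr 1; ext y; ring
  rw [lintegral_congr h2, Measure.volume_eq_prod, lintegral_prod]
  exact ((hgm.comp measurable_fst).mul (hgm.comp measurable_snd)).mul
    ((measurable_one.indicator hS)) |>.aemeasurable


noncomputable def angSet (s : ℝ) : Set ℝ :=
  Ioc (-π) (-π + π / 2 * s) ∪ Icc (-(π / 2) - π / 2 * s) (-(π / 2) + π / 2 * s) ∪
    Icc (-(π / 2 * s)) (π / 2 * s) ∪ Icc (π / 2 - π / 2 * s) (π / 2 + π / 2 * s) ∪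
    Ico (π - π / 2 * s) π

theorem mem_angSet {θ s : ℝ} (hθ₁ : -π < θ) (hθ₂ : θ < π) (hs : 0 ≤ s)
    (h : |Real.cos θ * Real.sin θ| ≤ s) : θ ∈ angSet s := by
  have hπ := Real.pi_pos
  have hsin : |Real.sin (2 * θ)| ≤ 2 * s := by
    calc |Real.sin (2 * θ)| = 2 * |Real.cos θ * Real.sin θ| := by
          rw [Real.sin_two_mul, abs_mul, abs_mul, abs_mul, abs_two]; ring
      _ ≤ 2 * s := by linarith
  set φ := 2 * θ with hφ
  set k : ℤ := round (φ / π) with hk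
  have hkd : |φ / π - k| ≤ 1 / 2 := abs_sub_round _
  have hψ : |φ - k * π| ≤ π / 2 := by
    have heq : φ - k * π = (φ / π - k) * π := by field_simp
    rw [heq, abs_mul, abs_of_pos hπ]
    nlinarith [hkd]
  have h1 : |Real.sin (φ - k * π)| = |Real.sin φ| := by
    have h0 := Real.sin_add_int_mul_pi (φ - k * π) k
    simp only [sub_add_cancel] at h0
    have habs : |((-1 : ℝ)) ^ k| = 1 := by
      rcases Int.even_or_odd k with he | ho
      · rw [he.neg_one_zpow, abs_one]
      · rw [ho.neg_one_zpow, abs_neg, abs_one]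
    rw [h0, abs_mul, habs, one_mul]
  have hsin2 : Real.sin |φ - k * π| = |Real.sin φ| := by
    rw [← h1]
    rcases le_or_gt 0 (φ - k * π) with hc | hc
    · rw [abs_of_nonneg hc, abs_of_nonneg]
      exact Real.sin_nonneg_of_nonneg_of_le_pi hc
        (le_trans (le_abs_self _) (hψ.trans (by linarith)))
    · rw [abs_of_neg hc, Real.sin_neg, abs_of_nonpos]
      apply Real.sin_nonpos_of_nonpos_of_neg_pi_le (le_of_lt hc)
      have := neg_abs_le (φ - k * π)
      linarith [hψ]
  have key : |φ - k * π| ≤ π * s := by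
    have h2 := Real.mul_le_sin (abs_nonneg (φ - k * π)) hψ
    rw [hsin2] at h2
    have h3 : 2 / π * |φ - k * π| ≤ 2 * s := le_trans h2 hsin
    have h4 : π / 2 * (2 / π * |φ - k * π|) ≤ π / 2 * (2 * s) :=
      mul_le_mul_of_nonneg_left h3 (by positivity)
    have h5 : π / 2 * (2 / π * |φ - k * π|) = |φ - k * π| := by field_simp
    nlinarith
  have hθk : |θ - k * (π / 2)| ≤ π / 2 * s := by
    have heq : θ - k * (π / 2) = (φ - k * π) / 2 := by rw [hφ]; ring
    rw [heq, abs_div, abs_two]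
    linarith
  have hkr : -2 ≤ k ∧ k ≤ 2 := by
    have hb : |φ / π| < 2 := by
      rw [abs_div, abs_of_pos hπ, div_lt_iff₀ hπ, hφ]
      rcases abs_cases (2 * θ) with ⟨h1', _⟩ | ⟨h1', _⟩ <;> rw [h1'] <;> linarith
    have h5 : |(k : ℝ)| < 5 / 2 := by
      calc |(k:ℝ)| = |(↑k - φ/π) + φ/π| := by ring_nf
        _ ≤ |(k:ℝ) - φ/π| + |φ/π| := abs_add_le _ _
        _ = |φ/π - k| + |φ/π| := by rw [abs_sub_comm]
        _ < 1/2 + 2 := by linarith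
        _ = 5/2 := by norm_num
    have h7 : |k| < 3 := by
      exact_mod_cast (show ((|k| : ℤ) : ℝ) < 3 by push_cast; linarith)
    have h8 := abs_lt.mp h7
    omega
  obtain ⟨hm1, hm2⟩ := abs_le.mp hθk
  obtain ⟨hk1, hk2⟩ := hkr
  interval_cases k
  · refine Or.inl (Or.inl (Or.inl (Or.inl ⟨hθ₁, ?_⟩)))
    push_cast at hm2; linarith
  · refine Or.inl (Or.inl (Or.inl (Or.inr ⟨?_, ?_⟩))) <;> push_cast at hm1 hm2 <;> linarith
  · refine Or.inl (Or.inl (Or.inr ⟨?_, ?_⟩)) <;> push_cast at hm1 hm2 <;> linarith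
  · refine Or.inl (Or.inr ⟨?_, ?_⟩) <;> push_cast at hm1 hm2 <;> linarith
  · refine Or.inr ⟨?_, hθ₂⟩
    push_cast at hm1; linarith

theorem volume_angSet {s : ℝ} (hs : 0 ≤ s) : volume (angSet s) ≤ ENNReal.ofReal (4 * π * s) := by
  have hπ := Real.pi_pos
  have hw : 0 ≤ π / 2 * s := by positivity
  calc volume (angSet s)
      ≤ volume (Ioc (-π) (-π + π / 2 * s)) +
        volume (Icc (-(π / 2) - π / 2 * s) (-(π / 2) + π / 2 * s)) +
        volume (Icc (-(π / 2 * s)) (π / 2 * s)) +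
        volume (Icc (π / 2 - π / 2 * s) (π / 2 + π / 2 * s)) +
        volume (Ico (π - π / 2 * s) π) := by
        refine le_trans (measure_union_le _ _) ?_
        gcongr
        refine le_trans (measure_union_le _ _) ?_
        gcongr
        refine le_trans (measure_union_le _ _) ?_
        gcongr
        exact measure_union_le _ _
    _ ≤ ENNReal.ofReal (4 * π * s) := by
        rw [Real.volume_Ioc, Real.volume_Icc, Real.volume_Icc, Real.volume_Icc, Real.volume_Ico]
        rw [← ENNReal.ofReal_add, ← ENNReal.ofReal_add, ← ENNReal.ofReal_add,
          ← ENNReal.ofReal_add]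
        · apply ENNReal.ofReal_le_ofReal; nlinarith
        all_goals nlinarith


theorem radial_inner (t : ℝ) (ht : 0 < t) :
    ∫ r in (0:ℝ)..(Real.sqrt (2*t)), r * Real.exp (-(r^2/2)) = 1 - Real.exp (-t) := by
  have hderiv : ∀ r ∈ uIcc (0:ℝ) (Real.sqrt (2*t)),
      HasDerivAt (fun r : ℝ => -Real.exp (-(r^2/2))) (r * Real.exp (-(r^2/2))) r := by
    intro r _
    have h1 : HasDerivAt (fun r : ℝ => -(r^2/2)) (-r) r := by
      simpa using (((hasDerivAt_pow 2 r)).div_const 2).fun_neg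
    have := (h1.exp).fun_neg; beta_reduce at this
    refine this.congr_deriv ?_
    ring
  rw [intervalIntegral.integral_eq_sub_of_hasDerivAt hderiv]
  · rw [Real.sq_sqrt (by linarith : (0:ℝ) ≤ 2*t)]
    norm_num
    ring_nf
  · apply Continuous.intervalIntegrable
    continuity

theorem expint_integrable (t : ℝ) (ht : 0 < t) :
    IntegrableOn (fun z : ℝ => z⁻¹ * Real.exp (-z)) (Ioi t) := by
  have h0 : IntegrableOn (fun z : ℝ => Real.exp (-z)) (Ioi t) := by
    simpa using exp_neg_integrableOn_Ioi t (by norm_num : (0:ℝ) < 1)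
  apply Integrable.mono' (h0.const_mul t⁻¹)
  · exact ((measurable_inv.mul (Real.measurable_exp.comp measurable_neg))).aestronglyMeasurable
  · filter_upwards [ae_restrict_mem measurableSet_Ioi] with z hz
    have hz' : t < z := hz
    rw [norm_mul, norm_inv, Real.norm_eq_abs, Real.norm_eq_abs,
      abs_of_pos (lt_trans ht hz'), abs_of_pos (Real.exp_pos _)]
    have : z⁻¹ ≤ t⁻¹ := by
      apply inv_anti₀ ht (le_of_lt hz')
    exact mul_le_mul_of_nonneg_right this (le_of_lt (Real.exp_pos _))

theorem radial_tail_integrable (t : ℝ) (ht : 0 < t) :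
    IntegrableOn (fun r : ℝ => 2*t/r * Real.exp (-(r^2/2))) (Ioi (Real.sqrt (2*t))) := by
  set c := Real.sqrt (2*t) with hc
  have hcpos : 0 < c := Real.sqrt_pos.mpr (by linarith)
  have h0 : IntegrableOn (fun r : ℝ => Real.exp (-r)) (Ioi c) := by
    simpa using exp_neg_integrableOn_Ioi c (by norm_num : (0:ℝ) < 1)
  apply Integrable.mono' ((h0.const_mul (2*t/c * Real.exp (1/2))))
  · apply Measurable.aestronglyMeasurable
    exact ((measurable_const.div measurable_id).mul
      ((Real.measurable_exp.comp ((measurable_id.pow_const 2).div_const 2).neg)))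
  · filter_upwards [ae_restrict_mem measurableSet_Ioi] with r hr
    have hr' : c < r := hr
    have hrpos : 0 < r := lt_trans hcpos hr'
    rw [Real.norm_eq_abs, abs_mul, abs_of_pos (by positivity : (0:ℝ) < 2*t/r),
      abs_of_pos (Real.exp_pos _)]
    have h1 : 2*t/r ≤ 2*t/c := by
      apply div_le_div_of_nonneg_left (by linarith) hcpos (le_of_lt hr')
    have h2 : Real.exp (-(r^2/2)) ≤ Real.exp (1/2) * Real.exp (-r) := by
      rw [← Real.exp_add]
      apply Real.exp_le_exp.mpr
      nlinarith [sq_nonneg (r - 1)]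
    calc 2*t/r * Real.exp (-(r^2/2)) ≤ 2*t/c * (Real.exp (1/2) * Real.exp (-r)) := by
          apply mul_le_mul h1 h2 (le_of_lt (Real.exp_pos _)) (by positivity)
      _ = 2*t/c * Real.exp (1/2) * Real.exp (-r) := by ring

theorem radial_subst (t : ℝ) (ht : 0 < t) :
    ∫ r in Ioi (Real.sqrt (2*t)), 2*t/r * Real.exp (-(r^2/2))
      = t * ∫ z in Ioi t, z⁻¹ * Real.exp (-z) := by
  set c := Real.sqrt (2*t) with hc
  have hcpos : 0 < c := Real.sqrt_pos.mpr (by linarith)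
  have hcsq : c^2 = 2*t := Real.sq_sqrt (by linarith)
  have hI := expint_integrable t ht
  have hG := radial_tail_integrable t ht
  have T1 : Tendsto (fun X => ∫ r in c..X, 2*t/r * Real.exp (-(r^2/2))) atTop
      (𝓝 (∫ r in Ioi c, 2*t/r * Real.exp (-(r^2/2)))) :=
    intervalIntegral_tendsto_integral_Ioi c hG tendsto_id
  have hXsq : Tendsto (fun X : ℝ => X^2/2) atTop atTop :=
    (tendsto_pow_atTop (by norm_num : 2 ≠ 0)).atTop_div_const (by norm_num)
  have T2 : Tendsto (fun X : ℝ => ∫ z in t..(X^2/2), t * (z⁻¹ * Real.exp (-z))) atTop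
      (𝓝 (∫ z in Ioi t, t * (z⁻¹ * Real.exp (-z)))) :=
    intervalIntegral_tendsto_integral_Ioi t (hI.const_mul t) hXsq
  have heq : ∀ᶠ X in atTop, ∫ r in c..X, 2*t/r * Real.exp (-(r^2/2))
      = ∫ z in t..(X^2/2), t * (z⁻¹ * Real.exp (-z)) := by
    filter_upwards [Filter.eventually_ge_atTop c] with X hX
    have key : ∫ r in c..X, r • ((fun z => t * (z⁻¹ * Real.exp (-z))) ∘ (fun r => r^2/2)) r
        = ∫ z in (c^2/2)..(X^2/2), t * (z⁻¹ * Real.exp (-z)) := by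
      apply intervalIntegral.integral_comp_smul_deriv' (f := fun r => r^2/2) (f' := fun r => r)
      · intro x _
        simpa using ((hasDerivAt_pow 2 x).div_const 2)
      · exact continuousOn_id
      · intro z hz
        obtain ⟨r, hr, hrz⟩ := hz
        have hr1 : c ≤ r := by
          rcases le_total c X with h | h
          · rw [uIcc_of_le h] at hr; exact hr.1
          · rw [uIcc_of_ge h] at hr; linarith [hr.1, hr.2]
        have hrpos : 0 < r := lt_of_lt_of_le hcpos hr1
        have hzpos : 0 < z := by rw [← hrz]; positivity
        apply ContinuousAt.continuousWithinAt
        apply ContinuousAt.mul continuousAt_const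
        apply ContinuousAt.mul (continuousAt_inv₀ (ne_of_gt hzpos))
        exact (Real.continuous_exp.comp continuous_neg).continuousAt
    have hc2 : c^2/2 = t := by rw [hcsq]; ring
    rw [hc2] at key
    rw [← key]
    apply intervalIntegral.integral_congr
    intro r hr
    have hr1 : c ≤ r := by rw [uIcc_of_le hX] at hr; exact hr.1
    have hrpos : 0 < r := lt_of_lt_of_le hcpos hr1
    simp only [smul_eq_mul, Function.comp_apply]
    field_simp
  have := tendsto_nhds_unique (T1.congr' heq) T2
  rw [this, ← integral_const_mul]


theorem log_integral (t : ℝ) (ht : 0 < t) :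
    ∫ z in Ioi t, (z⁻¹ - (z+1)⁻¹) = Real.log (1 + 1/t) := by
  have hderiv : ∀ z ∈ Ici t, HasDerivAt (fun z => Real.log z - Real.log (z+1))
      (z⁻¹ - (z+1)⁻¹) z := by
    intro z hz
    have hz0 : 0 < z := lt_of_lt_of_le ht hz
    have h1 : HasDerivAt Real.log z⁻¹ z := Real.hasDerivAt_log (ne_of_gt hz0)
    have h2 : HasDerivAt (fun z : ℝ => Real.log (z+1)) ((z+1)⁻¹) z := by
      have := (Real.hasDerivAt_log (by linarith : z+1 ≠ 0)).comp z
        ((hasDerivAt_id z).add_const 1)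
      simpa [Function.comp_def] using this
    exact h1.sub h2
  have hint : IntegrableOn (fun z : ℝ => z⁻¹ - (z+1)⁻¹) (Ioi t) := by
    have h0 : IntegrableOn (fun z : ℝ => z ^ (-2 : ℝ)) (Ioi t) :=
      integrableOn_Ioi_rpow_of_lt (by norm_num) ht
    apply Integrable.mono' h0
    · apply Measurable.aestronglyMeasurable
      exact measurable_inv.sub ((measurable_id.add_const 1).inv)
    · filter_upwards [ae_restrict_mem measurableSet_Ioi] with z hz
      have hz0 : 0 < z := lt_trans ht hz
      have he : z⁻¹ - (z+1)⁻¹ = (z * (z+1))⁻¹ := by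
        rw [mul_inv]
        field_simp; ring
      rw [Real.norm_eq_abs, he, abs_of_pos (by positivity),
        Real.rpow_neg (le_of_lt hz0), Real.rpow_two]
      apply inv_anti₀ (by positivity)
      nlinarith
  have htend : Tendsto (fun z => Real.log z - Real.log (z+1)) atTop (𝓝 0) := by
    have h1 : Tendsto (fun z : ℝ => 1 + z⁻¹) atTop (𝓝 1) := by
      simpa using (tendsto_const_nhds (x := (1:ℝ))).add tendsto_inv_atTop_zero
    have h2 : Tendsto (fun z : ℝ => Real.log (1 + z⁻¹)) atTop (𝓝 0) := by
      have := ((Real.continuousAt_log one_ne_zero).tendsto.comp h1)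
      simpa [Function.comp_def] using this
    have h3 : Tendsto (fun z : ℝ => -Real.log (1 + z⁻¹)) atTop (𝓝 0) := by
      simpa using h2.neg
    apply h3.congr'
    filter_upwards [eventually_gt_atTop 0] with z hz0
    rw [show (1 : ℝ) + z⁻¹ = (z+1)/z by field_simp,
      Real.log_div (by linarith) (ne_of_gt hz0)]
    ring
  rw [integral_Ioi_of_hasDerivAt_of_tendsto' hderiv hint htend]
  rw [show (1 : ℝ) + 1/t = (t+1)/t by field_simp,
    Real.log_div (by linarith) (ne_of_gt ht)]
  ring


theorem expint_le_log (t : ℝ) (ht : 0 < t) :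
    ∫ z in Ioi t, z⁻¹ * Real.exp (-z) ≤ Real.log (1 + 1/t) := by
  rw [← log_integral t ht]
  apply setIntegral_mono_on (expint_integrable t ht) ?_ measurableSet_Ioi
  · intro z hz
    have hz0 : 0 < z := lt_trans ht hz
    have h1 : Real.exp (-z) ≤ (z+1)⁻¹ := by
      rw [Real.exp_neg]
      apply inv_anti₀ (by linarith)
      linarith [Real.add_one_le_exp z]
    calc z⁻¹ * Real.exp (-z) ≤ z⁻¹ * (z+1)⁻¹ :=
          mul_le_mul_of_nonneg_left h1 (by positivity)
      _ = z⁻¹ - (z+1)⁻¹ := by field_simp; ring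
  · -- integrability of z⁻¹ - (z+1)⁻¹
    have h0 : IntegrableOn (fun z : ℝ => z ^ (-2 : ℝ)) (Ioi t) :=
      integrableOn_Ioi_rpow_of_lt (by norm_num) ht
    apply Integrable.mono' h0
    · apply Measurable.aestronglyMeasurable
      exact measurable_inv.sub ((measurable_id.add_const 1).inv)
    · filter_upwards [ae_restrict_mem measurableSet_Ioi] with z hz
      have hz0 : 0 < z := lt_trans ht hz
      have he : z⁻¹ - (z+1)⁻¹ = (z * (z+1))⁻¹ := by
        rw [mul_inv]; field_simp; ring
      rw [Real.norm_eq_abs, he, abs_of_pos (by positivity),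
        Real.rpow_neg (le_of_lt hz0), Real.rpow_two]
      apply inv_anti₀ (by positivity)
      nlinarith

theorem part2 (t : ℝ) (ht : 0 < t) :
    (1 - Real.exp (-t)) + t * (∫ z in Ioi t, z⁻¹ * Real.exp (-z))
      ≤ t * (1 + Real.log (1 + 1/t)) := by
  have h1 : 1 - Real.exp (-t) ≤ t := by
    linarith [Real.add_one_le_exp (-t)]
  have h2 : t * (∫ z in Ioi t, z⁻¹ * Real.exp (-z)) ≤ t * Real.log (1 + 1/t) :=
    mul_le_mul_of_nonneg_left (expint_le_log t ht) (le_of_lt ht)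
  nlinarith


theorem measurableSet_angSet (s : ℝ) : MeasurableSet (angSet s) := by
  unfold angSet
  exact ((((measurableSet_Ioc.union measurableSet_Icc).union
    measurableSet_Icc).union measurableSet_Icc).union measurableSet_Ico)

theorem part1 (t : ℝ) (ht : 0 < t) :
    ((gaussianReal 0 1).prod (gaussianReal 0 1)) {p : ℝ × ℝ | |p.1 * p.2| ≤ t}
      ≤ ENNReal.ofReal ((1 - Real.exp (-t)) + t * ∫ z in Set.Ioi t, z⁻¹ * Real.exp (-z)) := by
  have hπ := Real.pi_pos
  set b := Real.sqrt (2*t) with hb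
  have hbpos : 0 < b := Real.sqrt_pos.mpr (by linarith)
  set S : Set (ℝ × ℝ) := {q : ℝ × ℝ | |q.1 * q.2| ≤ t} with hSdef
  set c : ℝ → ℝ≥0∞ := fun r => ENNReal.ofReal (r * ((2*π)⁻¹ * Real.exp (-(r^2/2)))) with hcdef
  -- pdf product formula
  have hpdf : ∀ a d : ℝ, gaussianPDF 0 1 a * gaussianPDF 0 1 d
      = ENNReal.ofReal ((2*π)⁻¹ * Real.exp (-((a^2+d^2)/2))) := by
    intro a d
    rw [gaussianPDF_def, ← ENNReal.ofReal_mul (gaussianPDFReal_nonneg 0 1 a)]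
    congr 1
    simp only [gaussianPDFReal, NNReal.coe_one, mul_one, sub_zero]
    have h2π : Real.sqrt (2*π) * Real.sqrt (2*π) = 2*π := Real.mul_self_sqrt (by positivity)
    rw [show (√(2 * π))⁻¹ * rexp (-a ^ 2 / 2) * ((√(2 * π))⁻¹ * rexp (-d ^ 2 / 2))
      = ((√(2*π)) * (√(2*π)))⁻¹ * (rexp (-a ^ 2 / 2) * rexp (-d ^ 2 / 2)) by
        rw [mul_inv]; ring, h2π, ← Real.exp_add]
    congr 1
    ring
  -- bound functions
  set f₁ : ℝ × ℝ → ℝ≥0∞ := fun p => c p.1 * (Iic b).indicator 1 p.1 with hf₁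
  set f₂ : ℝ × ℝ → ℝ≥0∞ :=
    fun p => c p.1 * (Ioi b).indicator 1 p.1 * (angSet (t / p.1^2)).indicator 1 p.2 with hf₂
  have hcm : Measurable c := by
    apply Measurable.ennreal_ofReal
    fun_prop
  have hcne : ∀ r, c r ≠ ⊤ := fun r => ENNReal.ofReal_ne_top
  -- pointwise bound on the polar target
  have hpt : ∀ p ∈ polarCoord.target,
      ENNReal.ofReal p.1 * (gaussianPDF 0 1 (polarCoord.symm p).1 *
        gaussianPDF 0 1 (polarCoord.symm p).2 * S.indicator 1 (polarCoord.symm p))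
      ≤ f₁ p + f₂ p := by
    rintro ⟨r, θ⟩ hp
    obtain ⟨hr, hθ⟩ := hp
    simp only [mem_Ioi] at hr
    obtain ⟨hθ₁, hθ₂⟩ := hθ
    have hsymm : polarCoord.symm (r, θ) = (r * Real.cos θ, r * Real.sin θ) := rfl
    rw [hsymm]
    by_cases hq : (r * Real.cos θ, r * Real.sin θ) ∈ S
    · rw [Set.indicator_of_mem hq, hpdf]
      have hsq : (r * Real.cos θ)^2 + (r * Real.sin θ)^2 = r^2 := by
        have := Real.sin_sq_add_cos_sq θ
        nlinarith
      rw [hsq, Pi.one_apply, mul_one, ← ENNReal.ofReal_mul (le_of_lt hr)]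
      by_cases hrb : r ≤ b
      · refine le_trans ?_ (le_add_right (le_refl (f₁ (r, θ))))
        rw [hf₁]
        simp only [Set.indicator_of_mem (show r ∈ Iic b from hrb), Pi.one_apply, mul_one]
        exact le_refl _
      · push_neg at hrb
        refine le_trans ?_ (le_add_left (le_refl (f₂ (r, θ))))
        rw [hf₂]
        have hang : θ ∈ angSet (t / r^2) := by
          apply mem_angSet hθ₁ hθ₂ (by positivity)
          rw [le_div_iff₀ (by positivity)]
          have habs : |Real.cos θ * Real.sin θ| * r^2
              = |r * Real.cos θ * (r * Real.sin θ)| := by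
            simp only [abs_mul, abs_of_pos hr]
            ring
          rw [habs]
          exact hq
        simp only [Set.indicator_of_mem (show r ∈ Ioi b from hrb),
          Set.indicator_of_mem hang, Pi.one_apply, mul_one]
        exact le_refl _
    · rw [Set.indicator_of_notMem hq, mul_zero, mul_zero]
      exact zero_le
  -- measurability of f₁ and f₂
  have hf₁m : Measurable f₁ :=
    (hcm.comp measurable_fst).mul
      ((measurable_one.indicator measurableSet_Iic).comp measurable_fst)
  have hAm : MeasurableSet {p : ℝ × ℝ | p.2 ∈ angSet (t / p.1^2)} := by
    have hw : Measurable (fun p : ℝ × ℝ => π / 2 * (t / p.1^2)) := by fun_prop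
    unfold angSet
    simp only [Set.mem_union, Set.mem_Ioc, Set.mem_Icc, Set.mem_Ico]
    repeat
      apply MeasurableSet.union
    · exact (measurableSet_lt measurable_const measurable_snd).inter
        (measurableSet_le measurable_snd (by fun_prop))
    · exact (measurableSet_le (by fun_prop) measurable_snd).inter
        (measurableSet_le measurable_snd (by fun_prop))
    · exact (measurableSet_le (by fun_prop) measurable_snd).inter
        (measurableSet_le measurable_snd (by fun_prop))
    · exact (measurableSet_le (by fun_prop) measurable_snd).inter
        (measurableSet_le measurable_snd (by fun_prop))
    · exact (measurableSet_le (by fun_prop) measurable_snd).inter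
        (measurableSet_lt measurable_snd measurable_const)
  have hindeq : (fun p : ℝ × ℝ => (angSet (t / p.1^2)).indicator (1 : ℝ → ℝ≥0∞) p.2)
      = {p : ℝ × ℝ | p.2 ∈ angSet (t / p.1^2)}.indicator (1 : ℝ × ℝ → ℝ≥0∞) := by
    ext p
    by_cases h : p.2 ∈ angSet (t / p.1^2)
    · simp only [Set.indicator_of_mem h,
        Set.indicator_of_mem (show p ∈ {p : ℝ × ℝ | p.2 ∈ angSet (t / p.1^2)} from h),
        Pi.one_apply]
    · simp only [Set.indicator_of_notMem h,
        Set.indicator_of_notMem (show p ∉ {p : ℝ × ℝ | p.2 ∈ angSet (t / p.1^2)} from h)]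
  have hf₂m : Measurable f₂ := by
    apply Measurable.mul
    · exact (hcm.comp measurable_fst).mul
        ((measurable_one.indicator measurableSet_Ioi).comp measurable_fst)
    · rw [hindeq]
      exact measurable_one.indicator hAm
  -- the two integrals
  have htarget : polarCoord.target = Ioi (0:ℝ) ×ˢ Ioo (-π) π := rfl
  have hI1 : ∫⁻ p in polarCoord.target, f₁ p = ENNReal.ofReal (1 - Real.exp (-t)) := by
    rw [htarget, Measure.volume_eq_prod, ← Measure.prod_restrict,
      lintegral_prod _ hf₁m.aemeasurable]
    have hinner : ∀ r : ℝ, ∫⁻ θ in Ioo (-π) π, f₁ (r, θ)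
        = c r * (Iic b).indicator 1 r * ENNReal.ofReal (2*π) := by
      intro r
      rw [hf₁]
      simp only []
      rw [setLIntegral_const, Real.volume_Ioo]
      congr 1
      ring_nf
    rw [lintegral_congr hinner]
    have hcongr : ∫⁻ r in Ioi (0:ℝ), c r * (Iic b).indicator 1 r * ENNReal.ofReal (2*π)
        = ∫⁻ r in Ioi (0:ℝ),
            (Iic b).indicator (fun r => ENNReal.ofReal (r * Real.exp (-(r^2/2)))) r := by
      apply setLIntegral_congr_fun measurableSet_Ioi
      intro r hr; dsimp only
      have hr0 : (0:ℝ) < r := hr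
      by_cases hrb : r ∈ Iic b
      · rw [Set.indicator_of_mem hrb, Set.indicator_of_mem hrb, Pi.one_apply, mul_one, hcdef]
        rw [← ENNReal.ofReal_mul (by positivity)]
        congr 1
        field_simp
      · rw [Set.indicator_of_notMem hrb, Set.indicator_of_notMem hrb, mul_zero, zero_mul]
    rw [hcongr, lintegral_indicator measurableSet_Iic,
      Measure.restrict_restrict measurableSet_Iic,
      show Iic b ∩ Ioi (0:ℝ) = Ioc 0 b by rw [inter_comm, Ioi_inter_Iic]]
    rw [← ofReal_integral_eq_lintegral_ofReal]
    · rw [← intervalIntegral.integral_of_le hbpos.le, radial_inner t ht]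
    · apply Continuous.integrableOn_Ioc
      fun_prop
    · filter_upwards [ae_restrict_mem measurableSet_Ioc] with r hr
      have : 0 < r := hr.1
      positivity
  have hI2 : ∫⁻ p in polarCoord.target, f₂ p
      ≤ ENNReal.ofReal (t * ∫ z in Set.Ioi t, z⁻¹ * Real.exp (-z)) := by
    rw [htarget, Measure.volume_eq_prod, ← Measure.prod_restrict,
      lintegral_prod _ hf₂m.aemeasurable]
    have hindne : ∀ r : ℝ, c r * (Ioi b).indicator 1 r ≠ ⊤ := by
      intro r
      apply ENNReal.mul_ne_top (hcne r)
      by_cases h : r ∈ Ioi b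
      · rw [Set.indicator_of_mem h]; exact ENNReal.one_ne_top
      · rw [Set.indicator_of_notMem h]; exact ENNReal.zero_ne_top
    have hinner : ∀ r : ℝ, ∫⁻ θ in Ioo (-π) π, f₂ (r, θ)
        ≤ c r * (Ioi b).indicator 1 r * ENNReal.ofReal (4 * π * (t / r^2)) := by
      intro r
      rw [hf₂]
      simp only []
      rw [lintegral_const_mul' _ _ (hindne r), lintegral_indicator_one (measurableSet_angSet _)]
      apply mul_le_mul_right
      refine le_trans ?_ (volume_angSet (by positivity))
      exact Measure.restrict_apply_le _ _
    calc ∫⁻ r in Ioi (0:ℝ), ∫⁻ θ in Ioo (-π) π, f₂ (r, θ)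
        ≤ ∫⁻ r in Ioi (0:ℝ), c r * (Ioi b).indicator 1 r * ENNReal.ofReal (4 * π * (t / r^2)) :=
          lintegral_mono fun r => hinner r
      _ = ∫⁻ r in Ioi (0:ℝ),
            (Ioi b).indicator (fun r => ENNReal.ofReal (2*t/r * Real.exp (-(r^2/2)))) r := by
          apply setLIntegral_congr_fun measurableSet_Ioi
          intro r hr; dsimp only
          by_cases hrb : r ∈ Ioi b
          · rw [Set.indicator_of_mem hrb, Set.indicator_of_mem hrb, Pi.one_apply, mul_one, hcdef]
            have hr0 : (0:ℝ) < r := hr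
            rw [← ENNReal.ofReal_mul (by positivity)]
            congr 1
            field_simp
            ring
          · rw [Set.indicator_of_notMem hrb, Set.indicator_of_notMem hrb, mul_zero, zero_mul]
      _ = ENNReal.ofReal (t * ∫ z in Set.Ioi t, z⁻¹ * Real.exp (-z)) := by
          rw [lintegral_indicator measurableSet_Ioi,
            Measure.restrict_restrict measurableSet_Ioi,
            show Ioi b ∩ Ioi (0:ℝ) = Ioi b from
              inter_eq_left.mpr (fun x hx => lt_trans hbpos hx)]
          rw [← ofReal_integral_eq_lintegral_ofReal (radial_tail_integrable t ht)]
          · rw [radial_subst t ht]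
          · filter_upwards [ae_restrict_mem measurableSet_Ioi] with r hr
            have hr0 : (0:ℝ) < r := lt_trans hbpos hr
            positivity
  -- assemble
  rw [step1 t, ← my_lintegral_comp_polarCoord_symm]
  have hmono : ∫⁻ p in polarCoord.target,
      ENNReal.ofReal p.1 * (gaussianPDF 0 1 (polarCoord.symm p).1 *
        gaussianPDF 0 1 (polarCoord.symm p).2 * S.indicator 1 (polarCoord.symm p))
      ≤ ∫⁻ p in polarCoord.target, (f₁ p + f₂ p) := by
    apply lintegral_mono_ae
    filter_upwards [ae_restrict_mem polarCoord.open_target.measurableSet] with p hp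
    exact hpt p hp
  refine le_trans hmono ?_
  rw [lintegral_add_left hf₁m, hI1]
  have hnn1 : 0 ≤ 1 - Real.exp (-t) := by
    have : Real.exp (-t) ≤ 1 := by
      rw [← Real.exp_zero]
      exact Real.exp_le_exp.mpr (by linarith)
    linarith
  have hnn2 : 0 ≤ t * ∫ z in Set.Ioi t, z⁻¹ * Real.exp (-z) := by
    apply mul_nonneg ht.le
    apply setIntegral_nonneg measurableSet_Ioi
    intro z hz
    have hz0 : 0 < z := lt_trans ht hz
    positivity
  rw [ENNReal.ofReal_add hnn1 hnn2]
  exact add_le_add_right hI2 _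

/-- for `u, v` independent standard Gaussians and `t > 0`,
`P[|uv| ≤ t] ≤ (1 − e^{−t}) + t ∫_t^∞ z⁻¹ e^{−z} dz ≤ t(1 + ln(1 + 1/t))`. -/
theorem gaussian_product_small_ball (t : ℝ) (ht : 0 < t) :
    ((gaussianReal 0 1).prod (gaussianReal 0 1)) {p : ℝ × ℝ | |p.1 * p.2| ≤ t}
        ≤ ENNReal.ofReal
          ((1 - Real.exp (-t)) + t * ∫ z in Set.Ioi t, z⁻¹ * Real.exp (-z)) ∧
      (1 - Real.exp (-t)) + t * (∫ z in Set.Ioi t, z⁻¹ * Real.exp (-z))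
        ≤ t * (1 + Real.log (1 + 1 / t)) := by
  exact ⟨part1 t ht, part2 t ht⟩
end
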